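/- arXiv:1203.0050 — 13 statements merged into one kernel-verified Lean document; each statement's English description precedes it below -/
import Mathlib

section
/- Let G = (V, E) be a finite simple graph with a nonnegative cost function c : V → ℝ, and let (M, y) be a complementary pair. Then ∑_{v∈M} c(v) ≤ 2·∑_{e∈E} y(e), and consequently ∑_{v∈M} c(v) ≤ 2·∑_{v∈M'} c(v) for every vertex cover M' of G; that is, M is a 2-approximate minimum-cost vertex cover. -/
open Finset

lemma double_count {V : Type*} [Fintype V] [DecidableEq V]
    (G : SimpleGraph V) [DecidableRel G.Adj]
    (S : Finset V) (y : Sym2 V → ℝ) :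
    ∑ v ∈ S, ∑ e ∈ G.edgeFinset.filter (fun e => v ∈ e), y e
      = ∑ e ∈ G.edgeFinset, (S.filter (fun v => v ∈ e)).card * y e := by
  simp only [Finset.sum_filter]
  rw [Finset.sum_comm]
  congr 1
  ext e
  rw [← Finset.sum_filter, Finset.sum_const, nsmul_eq_mul]

lemma card_mem_le {V : Type*} [DecidableEq V] (S : Finset V) (e : Sym2 V) :
    (S.filter (fun v => v ∈ e)).card ≤ 2 := by
  induction e using Sym2.ind with
  | _ u w =>
    calc (S.filter (fun v => v ∈ s(u, w))).card
        ≤ ({u, w} : Finset V).card := by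
          apply Finset.card_le_card
          intro v hv
          simp only [Finset.mem_filter, Sym2.mem_iff] at hv
          simp [hv.2]
      _ ≤ 2 := Finset.card_insert_le _ _ |>.trans (by simp)

/-- For a finite simple graph `G` with nonnegative costs `c`, if `(M, y)` is a
complementary pair (a vertex cover `M` together with a feasible dual solution `y` making every
vertex of `M` tight), then `∑_{v∈M} c v ≤ 2 ∑_{e∈E} y e`, and consequently
`∑_{v∈M} c v ≤ 2 ∑_{v∈M'} c v` for every vertex cover `M'`. -/
theorem stmt_0 {V : Type*} [Fintype V] [DecidableEq V]
    (G : SimpleGraph V) [DecidableRel G.Adj]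
    (c : V → ℝ) (hc : ∀ v, 0 ≤ c v)
    (M : Finset V) (y : Sym2 V → ℝ)
    (hcover : ∀ ⦃u w : V⦄, G.Adj u w → u ∈ M ∨ w ∈ M)
    (hy0 : ∀ e, 0 ≤ y e)
    (hyfeas : ∀ v : V, ∑ e ∈ G.edgeFinset.filter (fun e => v ∈ e), y e ≤ c v)
    (htight : ∀ v ∈ M, ∑ e ∈ G.edgeFinset.filter (fun e => v ∈ e), y e = c v) :
    (∑ v ∈ M, c v ≤ 2 * ∑ e ∈ G.edgeFinset, y e) ∧
      ∀ M' : Finset V, (∀ ⦃u w : V⦄, G.Adj u w → u ∈ M' ∨ w ∈ M') →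
        ∑ v ∈ M, c v ≤ 2 * ∑ v ∈ M', c v := by
  have key : ∑ v ∈ M, c v ≤ 2 * ∑ e ∈ G.edgeFinset, y e := by
    calc ∑ v ∈ M, c v
        = ∑ v ∈ M, ∑ e ∈ G.edgeFinset.filter (fun e => v ∈ e), y e := by
          exact (Finset.sum_congr rfl fun v hv => (htight v hv).symm)
      _ = ∑ e ∈ G.edgeFinset, (M.filter (fun v => v ∈ e)).card * y e :=
          double_count G M y
      _ ≤ ∑ e ∈ G.edgeFinset, 2 * y e := by
          apply Finset.sum_le_sum
          intro e he
          apply mul_le_mul_of_nonneg_right _ (hy0 e)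
          exact_mod_cast card_mem_le M e
      _ = 2 * ∑ e ∈ G.edgeFinset, y e := by rw [Finset.mul_sum]
  refine ⟨key, fun M' hM' => ?_⟩
  have cov : ∑ e ∈ G.edgeFinset, y e ≤ ∑ v ∈ M', c v := by
    calc ∑ e ∈ G.edgeFinset, y e
        ≤ ∑ e ∈ G.edgeFinset, (M'.filter (fun v => v ∈ e)).card * y e := by
          apply Finset.sum_le_sum
          intro e he
          have h1 : 1 ≤ (M'.filter (fun v => v ∈ e)).card := by
            rw [Finset.one_le_card]
            induction e using Sym2.ind with
            | _ u w =>
              rw [SimpleGraph.mem_edgeFinset, SimpleGraph.mem_edgeSet] at he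
              rcases hM' he with h | h
              · exact ⟨u, Finset.mem_filter.2 ⟨h, by simp⟩⟩
              · exact ⟨w, Finset.mem_filter.2 ⟨h, by simp⟩⟩
          nlinarith [hy0 e, (by exact_mod_cast h1 : (1:ℝ) ≤ (M'.filter (fun v => v ∈ e)).card)]
      _ = ∑ v ∈ M', ∑ e ∈ G.edgeFinset.filter (fun e => v ∈ e), y e :=
          (double_count G M' y).symm
      _ ≤ ∑ v ∈ M', c v := Finset.sum_le_sum fun v _ => hyfeas v
  linarith
end

section
/- For every finite simple graph G = (V, E) with a nonnegative cost function c : V → ℝ, there exists a complementary pair (M, y); that is, there exist a vertex cover M of G and a feasible dual solution y such that every v ∈ M is tight for y. (This is the output of the Bar-Yehuda–Even primal-dual algorithm.) -/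
open Finset

lemma aux_primal_dual {V : Type*} [DecidableEq V] (E : Finset (Sym2 V)) :
    ∀ c : V → ℝ, (∀ v, 0 ≤ c v) →
    ∃ (M : Finset V) (y : Sym2 V → ℝ),
      (∀ e ∈ E, ∃ v, v ∈ e ∧ v ∈ M) ∧
      (∀ e, 0 ≤ y e) ∧
      (∀ v : V, ∑ e ∈ E.filter (fun e => v ∈ e), y e ≤ c v) ∧
      (∀ v ∈ M, ∑ e ∈ E.filter (fun e => v ∈ e), y e = c v) := by
  induction E using Finset.induction_on with
  | empty =>
    intro c hc
    exact ⟨∅, 0, by simp, by simp, by simpa using hc, by simp⟩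
  | @insert e s he ih =>
    intro c hc
    induction e using Sym2.ind with
    | _ u w =>
    set e : Sym2 V := s(u, w) with hedef
    set t : ℝ := min (c u) (c w) with htdef
    have ht0 : 0 ≤ t := le_min (hc u) (hc w)
    set c' : V → ℝ := fun v => if v ∈ e then c v - t else c v with hc'def
    have hc'0 : ∀ v, 0 ≤ c' v := by
      intro v
      simp only [hc'def]
      have h1 : t ≤ c u := min_le_left _ _
      have h2 : t ≤ c w := min_le_right _ _
      split
      · rename_i hv
        rcases Sym2.mem_iff.mp hv with h | h <;> rw [h] <;> linarith
      · exact hc v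
    obtain ⟨M', y', hcover', hy'0, hfeas', htight'⟩ := ih c' hc'0
    set v0 : V := if c u ≤ c w then u else w with hv0def
    have hv0e : v0 ∈ e := by
      simp only [hv0def]; split <;> simp [hedef]
    have hcv0 : c v0 = t := by
      simp only [hv0def, htdef]
      rcases le_or_gt (c u) (c w) with h | h
      · rw [if_pos h, min_eq_left h]
      · rw [if_neg (not_le.mpr h), min_eq_right h.le]
    refine ⟨insert v0 M', fun f => if f = e then t else y' f, ?_, ?_, ?_, ?_⟩
    · intro f hf
      rcases Finset.mem_insert.mp hf with rfl | hf
      · exact ⟨v0, hv0e, Finset.mem_insert_self _ _⟩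
      · obtain ⟨v, hv1, hv2⟩ := hcover' f hf
        exact ⟨v, hv1, Finset.mem_insert_of_mem hv2⟩
    · intro f; dsimp only; split
      · exact ht0
      · exact hy'0 f
    · -- feasibility
      intro v
      have hsum : ∀ p : Sym2 V → Prop, [DecidablePred p] →
          ∑ f ∈ s.filter p, (if f = e then t else y' f) = ∑ f ∈ s.filter p, y' f := by
        intro p _
        refine Finset.sum_congr rfl fun f hf => ?_
        have : f ≠ e := fun h => he (h ▸ (Finset.mem_filter.mp hf).1)
        simp [this]
      rw [Finset.filter_insert]
      by_cases hv : v ∈ e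
      · rw [if_pos hv, Finset.sum_insert (by simp [he]), if_pos rfl, hsum]
        have := hfeas' v
        simp only [hc'def, if_pos hv] at this
        linarith
      · rw [if_neg hv, hsum]
        have := hfeas' v
        simp only [hc'def, if_neg hv] at this
        exact this
    · -- tightness
      intro v hv
      have hsum : ∀ p : Sym2 V → Prop, [DecidablePred p] →
          ∑ f ∈ s.filter p, (if f = e then t else y' f) = ∑ f ∈ s.filter p, y' f := by
        intro p _
        refine Finset.sum_congr rfl fun f hf => ?_
        have : f ≠ e := fun h => he (h ▸ (Finset.mem_filter.mp hf).1)
        simp [this]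
      rw [Finset.filter_insert]
      rcases Finset.mem_insert.mp hv with rfl | hvM'
      · -- v = v0
        rw [if_pos hv0e, Finset.sum_insert (by simp [he]), if_pos rfl, hsum]
        have hle := hfeas' v0
        have hge : 0 ≤ ∑ f ∈ s.filter (fun f => v0 ∈ f), y' f :=
          Finset.sum_nonneg fun f _ => hy'0 f
        have hc'v0 : c' v0 = 0 := by
          simp only [hc'def, if_pos hv0e]; linarith [hcv0]
        rw [hc'v0] at hle
        have : ∑ f ∈ s.filter (fun f => v0 ∈ f), y' f = 0 := le_antisymm hle hge
        rw [this]; linarith [hcv0]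
      · have ht := htight' v hvM'
        by_cases hve : v ∈ e
        · rw [if_pos hve, Finset.sum_insert (by simp [he]), if_pos rfl, hsum, ht]
          simp only [hc'def, if_pos hve]; ring
        · rw [if_neg hve, hsum, ht]
          simp [hc'def, hve]

/-- For every finite simple graph `G` with nonnegative costs `c` there exists a
complementary pair `(M, y)`: a vertex cover `M` and a feasible dual solution `y` (nonnegative,
with `∑_{e ∋ v} y e ≤ c v` for all `v`) such that every `v ∈ M` is tight for `y`. -/
theorem stmt_1 {V : Type*} [Fintype V] [DecidableEq V]
    (G : SimpleGraph V) [DecidableRel G.Adj]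
    (c : V → ℝ) (hc : ∀ v, 0 ≤ c v) :
    ∃ (M : Finset V) (y : Sym2 V → ℝ),
      (∀ ⦃u w : V⦄, G.Adj u w → u ∈ M ∨ w ∈ M) ∧
      (∀ e, 0 ≤ y e) ∧
      (∀ v : V, ∑ e ∈ G.edgeFinset.filter (fun e => v ∈ e), y e ≤ c v) ∧
      (∀ v ∈ M, ∑ e ∈ G.edgeFinset.filter (fun e => v ∈ e), y e = c v) := by
  obtain ⟨M, y, hcover, hy0, hfeas, htight⟩ := aux_primal_dual G.edgeFinset c hc
  refine ⟨M, y, ?_, hy0, hfeas, htight⟩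
  intro u w huw
  obtain ⟨v, hv1, hv2⟩ := hcover s(u, w) (by simpa using huw)
  rcases Sym2.mem_iff.mp hv1 with rfl | rfl
  · exact Or.inl hv2
  · exact Or.inr hv2
end

section
/- Let (M, y) be a complementary pair for the graph G = (V, E) with costs c. Define the strategy profile of the Mafia Vertex Cover Game in which M is the set of mafiosi, C = V∖M are civilians, and each mafioso u sets ransoms r(u,w) = y(uw) for every neighbor w of u. Then this strategy profile is a pure Nash equilibrium. -/
open Finset
open scoped Classical

namespace MafiaVC

variable {V : Type*} [Fintype V] [DecidableEq V]

noncomputable section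

/-- The demand `D(v) = ∑_{u∈M} r(u,v)` asked from agent `v`. -/
def demand (M : Finset V) (r : V → V → ℝ) (v : V) : ℝ := ∑ u ∈ M, r u v

/-- A valid strategy profile of the Mafia Vertex Cover Game: ransoms are nonnegative,
`r u w = 0` unless `u` is a mafioso and `uw` is an edge, and every mafioso `u` distributes
exactly `c u` among his neighbors. -/
def ValidProfile (G : SimpleGraph V) [DecidableRel G.Adj] (c : V → ℝ)
    (M : Finset V) (r : V → V → ℝ) : Prop :=
  (∀ u w, 0 ≤ r u w) ∧
  (∀ u w, u ∉ M ∨ ¬ G.Adj u w → r u w = 0) ∧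
  (∀ u ∈ M, ∑ w ∈ G.neighborFinset u, r u w = c u)

/-- Utility of agent `v` in the Mafia Vertex Cover Game.  A mafioso gets
`-c v + F⁺(v) - F⁻(v)` where `F⁻(v) = min(D v, c v)` and protected mafiosi
(`u ∈ M` with `D u > c u`) pay only the fraction `c u / D u` of the demanded ransom.
A civilian gets `-D v` minus the penalty `T` if he is incident to an uncovered edge. -/
def utility (G : SimpleGraph V) [DecidableRel G.Adj] (c : V → ℝ) (T : ℝ)
    (M : Finset V) (r : V → V → ℝ) (v : V) : ℝ :=
  if v ∈ M then
    -c v +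
      (∑ u ∈ G.neighborFinset v,
        if u ∈ M ∧ c u < demand M r u then (c u / demand M r u) * r v u else r v u) -
      min (demand M r v) (c v)
  else
    -demand M r v - (if ∃ u ∈ G.neighborFinset v, u ∉ M then T else 0)

/-- `(M', r')` is a unilateral deviation of agent `v` from `(M, r)`:
all other agents keep their strategies. -/
def Deviation (v : V) (M M' : Finset V) (r r' : V → V → ℝ) : Prop :=
  (∀ u, u ≠ v → (u ∈ M' ↔ u ∈ M)) ∧ ∀ u w, u ≠ v → r' u w = r u w

/-- `(M, r)` is a pure Nash equilibrium: it is a valid profile and no agent can strictly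
increase his utility by a unilateral deviation. -/
def IsNashEq (G : SimpleGraph V) [DecidableRel G.Adj] (c : V → ℝ) (T : ℝ)
    (M : Finset V) (r : V → V → ℝ) : Prop :=
  ValidProfile G c M r ∧
  ∀ (v : V) (M' : Finset V) (r' : V → V → ℝ),
    ValidProfile G c M' r' → Deviation v M M' r r' →
      utility G c T M' r' v ≤ utility G c T M r v


lemma incidence_filter_eq_image (G : SimpleGraph V) [DecidableRel G.Adj] (u : V) :
    G.edgeFinset.filter (fun e => u ∈ e) = (G.neighborFinset u).image (fun w => s(u, w)) := by
  ext e
  induction e using Sym2.ind with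
  | _ a b =>
    simp only [mem_filter, SimpleGraph.mem_edgeFinset, SimpleGraph.mem_edgeSet,
      Sym2.mem_iff, mem_image, SimpleGraph.mem_neighborFinset]
    constructor
    · rintro ⟨hab, rfl | rfl⟩
      · exact ⟨b, hab, rfl⟩
      · exact ⟨a, hab.symm, Sym2.eq_swap⟩
    · rintro ⟨w, hw, he⟩
      rcases Sym2.eq_iff.mp he with ⟨rfl, rfl⟩ | ⟨rfl, rfl⟩
      · exact ⟨hw, Or.inl rfl⟩
      · exact ⟨hw.symm, Or.inr rfl⟩

lemma sum_nbhd (G : SimpleGraph V) [DecidableRel G.Adj] (y : Sym2 V → ℝ) (u : V) :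
    ∑ w ∈ G.neighborFinset u, y s(u, w) = ∑ e ∈ G.edgeFinset.filter (fun e => u ∈ e), y e := by
  rw [incidence_filter_eq_image]
  exact (Finset.sum_image fun a _ b _ h => Sym2.congr_right.mp h).symm

/-- a complementary pair `(M, y)` yields a pure Nash equilibrium of the Mafia
Vertex Cover Game where `M` is the Mafia and each mafioso `u` demands `r(u,w) = y(uw)` from
every neighbor `w`. -/
theorem stmt_2 (G : SimpleGraph V) [DecidableRel G.Adj] (c : V → ℝ)
    (hc : ∀ v, 0 ≤ c v) (T : ℝ) (hT : 2 * ∑ v, c v < T)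
    (M : Finset V) (y : Sym2 V → ℝ)
    (hcover : ∀ ⦃u w : V⦄, G.Adj u w → u ∈ M ∨ w ∈ M)
    (hy0 : ∀ e, 0 ≤ y e)
    (hyfeas : ∀ v : V, ∑ e ∈ G.edgeFinset.filter (fun e => v ∈ e), y e ≤ c v)
    (htight : ∀ v ∈ M, ∑ e ∈ G.edgeFinset.filter (fun e => v ∈ e), y e = c v) :
    IsNashEq G c T M (fun u w => if u ∈ M ∧ G.Adj u w then y s(u, w) else 0) := by
  set r : V → V → ℝ := fun u w => if u ∈ M ∧ G.Adj u w then y s(u, w) else 0 with hr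
  -- demands are bounded by costs
  have hdem : ∀ v, demand M r v ≤ c v := by
    intro v
    have h1 : demand M r v ≤ ∑ u, (if G.Adj v u then y s(v, u) else 0) := by
      refine le_trans (Finset.sum_le_sum (f := fun u => r u v)
        (g := fun u => if G.Adj v u then y s(v, u) else 0) ?_)
        (Finset.sum_le_sum_of_subset_of_nonneg (Finset.subset_univ M) ?_)
      · intro u hu
        simp only [hr]
        by_cases hadj : G.Adj u v
        · rw [if_pos ⟨hu, hadj⟩, if_pos hadj.symm, Sym2.eq_swap]
        · rw [if_neg (fun h => hadj h.2)]
          split <;> [exact hy0 _; exact le_rfl]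
      · intro u _ _
        split <;> [exact hy0 _; exact le_rfl]
    have h2 : ∑ u, (if G.Adj v u then y s(v, u) else 0)
        = ∑ w ∈ G.neighborFinset v, y s(v, w) := by
      rw [← Finset.sum_filter]
      congr 1
      ext u
      simp [SimpleGraph.mem_neighborFinset]
    calc demand M r v ≤ _ := h1
      _ = _ := h2
      _ = _ := sum_nbhd G y v
      _ ≤ c v := hyfeas v
  have hvalid : ValidProfile G c M r := by
    refine ⟨fun u w => ?_, fun u w h => ?_, fun u hu => ?_⟩
    · simp only [hr]; split <;> [exact hy0 _; exact le_rfl]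
    · simp only [hr]
      rcases h with h | h
      · exact if_neg fun hh => h hh.1
      · exact if_neg fun hh => h hh.2
    · have : ∀ w ∈ G.neighborFinset u, r u w = y s(u, w) := by
        intro w hw
        simp only [hr]
        exact if_pos ⟨hu, (SimpleGraph.mem_neighborFinset _ _ _).mp hw⟩
      rw [Finset.sum_congr rfl this, sum_nbhd G y u, htight u hu]
  refine ⟨hvalid, fun v M' r' hv' hd => ?_⟩
  -- old utility is -demand M r v
  have hTpos : 0 ≤ T := le_of_lt (lt_of_le_of_lt (by
    have : (0:ℝ) ≤ ∑ v, c v := Finset.sum_nonneg fun v _ => hc v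
    linarith) hT)
  have hold : utility G c T M r v = -demand M r v := by
    unfold utility
    by_cases hv : v ∈ M
    · rw [if_pos hv]
      have hS : ∑ u ∈ G.neighborFinset v,
          (if u ∈ M ∧ c u < demand M r u then (c u / demand M r u) * r v u else r v u)
          = ∑ u ∈ G.neighborFinset v, r v u := by
        refine Finset.sum_congr rfl fun u _ => if_neg ?_
        rintro ⟨_, hlt⟩
        exact absurd (hdem u) (not_le.mpr hlt)
      rw [hS, hvalid.2.2 v hv, min_eq_left (hdem v)]
      ring
    · rw [if_neg hv, if_neg, sub_zero]
      rintro ⟨u, hu, huM⟩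
      have hadj := (SimpleGraph.mem_neighborFinset _ _ _).mp hu
      rcases hcover hadj with h | h
      · exact hv h
      · exact huM h
  -- new demand on v equals old demand
  have hrvv : r v v = 0 := by
    simp only [hr]
    exact if_neg fun h => G.irrefl h.2
  have hr'vv : r' v v = 0 := hv'.2.1 v v (Or.inr (G.irrefl))
  have hDv : demand M' r' v = demand M r v := by
    unfold demand
    rw [← Finset.sum_erase (f := fun u => r' u v) M' hr'vv, ← Finset.sum_erase (f := fun u => r u v) M hrvv]
    have hM : M'.erase v = M.erase v := by
      ext u
      simp only [mem_erase, and_congr_right_iff]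
      intro hne
      exact hd.1 u hne
    rw [hM]
    exact Finset.sum_congr rfl fun u hu => hd.2 u v (mem_erase.mp hu).1
  rw [hold]
  unfold utility
  by_cases hvM' : v ∈ M'
  · rw [if_pos hvM']
    have hS : ∑ u ∈ G.neighborFinset v,
        (if u ∈ M' ∧ c u < demand M' r' u then (c u / demand M' r' u) * r' v u else r' v u)
        ≤ ∑ u ∈ G.neighborFinset v, r' v u := by
      refine Finset.sum_le_sum fun u _ => ?_
      split
      · next h =>
        have hpos : 0 < demand M' r' u := lt_of_le_of_lt (hc u) h.2
        calc (c u / demand M' r' u) * r' v u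
            ≤ 1 * r' v u := by
              apply mul_le_mul_of_nonneg_right _ (hv'.1 v u)
              exact (div_le_one hpos).mpr (le_of_lt h.2)
          _ = r' v u := one_mul _
      · exact le_refl _
    have h2 := hv'.2.2 v ‹v ∈ M'›
    have hmin : min (demand M' r' v) (c v) = demand M r v := by
      rw [hDv, min_eq_left (hdem v)]
    linarith [hS, h2, hmin]
  · rw [if_neg hvM', hDv]
    have : 0 ≤ (if ∃ u ∈ G.neighborFinset v, u ∉ M' then T else 0) := by
      split <;> [exact hTpos; exact le_rfl]
    linarith


end
end MafiaVC
end

section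
/- For every finite simple graph G = (V, E) with a nonnegative cost function c : V → ℝ, the Mafia Vertex Cover Game has a pure Nash equilibrium; that is, there exists a strategy profile (M, r) such that no single agent can strictly increase his utility by unilaterally changing his own strategy. -/
open Finset
open scoped Classical

namespace MafiaVC

variable {V : Type*} [Fintype V] [DecidableEq V]

noncomputable section

/-! ### Auxiliary greedy construction of a maximal fractional matching -/

/-- Amount added on the edge `uw` given current loads `L`. -/
def step (c L : V → ℝ) (u w : V) : ℝ := min (c u - L u) (c w - L w)

/-- Updated loads after processing the pair `(u, w)`. -/
def bump (c L : V → ℝ) (u w : V) : V → ℝ :=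
  fun v => L v + (if v = u then step c L u w else 0) + (if v = w then step c L u w else 0)

/-- Loads after greedily processing a list of pairs. -/
def loads (c : V → ℝ) : List (V × V) → (V → ℝ) → V → ℝ
  | [], L => L
  | (u, w) :: t, L => loads c t (bump c L u w)

/-- The (symmetric) fractional matching built greedily along a list of pairs. -/
def mat (c : V → ℝ) : List (V × V) → (V → ℝ) → V → V → ℝ
  | [], _ => fun _ _ => 0
  | (u, w) :: t, L => fun a b =>
      (if (a = u ∧ b = w) ∨ (a = w ∧ b = u) then step c L u w else 0) +
        mat c t (bump c L u w) a b

lemma step_nonneg {c L : V → ℝ} (hL : ∀ v, L v ≤ c v) (u w : V) : 0 ≤ step c L u w :=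
  le_min (by linarith [hL u]) (by linarith [hL w])

lemma bump_le {c L : V → ℝ} {u w : V} (huw : u ≠ w) (hL : ∀ v, L v ≤ c v) :
    ∀ v, bump c L u w v ≤ c v := by
  intro v
  unfold bump
  have hmin1 : step c L u w ≤ c u - L u := min_le_left _ _
  have hmin2 : step c L u w ≤ c w - L w := min_le_right _ _
  rcases eq_or_ne v u with rfl | hu
  · rw [if_pos rfl, if_neg huw]
    linarith
  rcases eq_or_ne v w with rfl | hw
  · rw [if_neg hu, if_pos rfl]
    linarith
  · rw [if_neg hu, if_neg hw]
    simpa using hL v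

lemma le_bump {c L : V → ℝ} {u w : V} (hL : ∀ v, L v ≤ c v) :
    ∀ v, L v ≤ bump c L u w v := by
  intro v
  unfold bump
  have h := step_nonneg hL u w
  have h1 : (0:ℝ) ≤ if v = u then step c L u w else 0 := by positivity
  have h2 : (0:ℝ) ≤ if v = w then step c L u w else 0 := by positivity
  linarith

lemma loads_le {c : V → ℝ} :
    ∀ (l : List (V × V)) (L : V → ℝ), (∀ p ∈ l, p.1 ≠ p.2) → (∀ v, L v ≤ c v) →
      ∀ v, loads c l L v ≤ c v
  | [], L, _, hL, v => hL v
  | (u, w) :: t, L, hl, hL, v => by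
    have huw : u ≠ w := hl (u, w) (List.mem_cons_self)
    exact loads_le t _ (fun p hp => hl p (List.mem_cons_of_mem _ hp)) (bump_le huw hL) v

lemma le_loads {c : V → ℝ} :
    ∀ (l : List (V × V)) (L : V → ℝ), (∀ p ∈ l, p.1 ≠ p.2) → (∀ v, L v ≤ c v) →
      ∀ v, L v ≤ loads c l L v
  | [], L, _, _, v => le_rfl
  | (u, w) :: t, L, hl, hL, v => by
    have huw : u ≠ w := hl (u, w) (List.mem_cons_self)
    exact (le_bump hL v).trans
      (le_loads t _ (fun p hp => hl p (List.mem_cons_of_mem _ hp)) (bump_le huw hL) v)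

lemma mat_nonneg {c : V → ℝ} :
    ∀ (l : List (V × V)) (L : V → ℝ), (∀ p ∈ l, p.1 ≠ p.2) → (∀ v, L v ≤ c v) →
      ∀ a b, 0 ≤ mat c l L a b
  | [], L, _, _, a, b => le_rfl
  | (u, w) :: t, L, hl, hL, a, b => by
    have huw : u ≠ w := hl (u, w) (List.mem_cons_self)
    have h1 : (0:ℝ) ≤ if (a = u ∧ b = w) ∨ (a = w ∧ b = u) then step c L u w else 0 := by
      have := step_nonneg hL u w; positivity
    have h2 := mat_nonneg t (bump c L u w) (fun p hp => hl p (List.mem_cons_of_mem _ hp))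
      (bump_le huw hL) a b
    unfold mat
    linarith

lemma mat_symm {c : V → ℝ} :
    ∀ (l : List (V × V)) (L : V → ℝ) (a b : V), mat c l L a b = mat c l L b a
  | [], L, a, b => rfl
  | (u, w) :: t, L, a, b => by
    unfold mat
    rw [mat_symm t _ a b]
    congr 1
    by_cases h : (a = u ∧ b = w) ∨ (a = w ∧ b = u)
    · rw [if_pos h, if_pos (by tauto)]
    · rw [if_neg h, if_neg (by tauto)]

lemma mat_support {c : V → ℝ} :
    ∀ (l : List (V × V)) (L : V → ℝ) (a b : V),
      (∀ p ∈ l, p ≠ (a, b) ∧ p ≠ (b, a)) → mat c l L a b = 0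
  | [], L, a, b, _ => rfl
  | (u, w) :: t, L, a, b, hl => by
    unfold mat
    have h0 := hl (u, w) (List.mem_cons_self)
    have hcond : ¬ ((a = u ∧ b = w) ∨ (a = w ∧ b = u)) := by
      rintro (⟨rfl, rfl⟩ | ⟨rfl, rfl⟩)
      · exact h0.1 rfl
      · exact h0.2 rfl
    rw [if_neg hcond, mat_support t _ a b (fun p hp => hl p (List.mem_cons_of_mem _ hp))]
    ring

lemma mat_rowsum {c : V → ℝ} :
    ∀ (l : List (V × V)) (L : V → ℝ), (∀ p ∈ l, p.1 ≠ p.2) →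
      ∀ a, ∑ b, mat c l L a b = loads c l L a - L a
  | [], L, _, a => by simp [mat, loads]
  | (u, w) :: t, L, hl, a => by
    have huw : u ≠ w := hl (u, w) (List.mem_cons_self)
    have IH := mat_rowsum (c := c) t (bump c L u w) (fun p hp => hl p (List.mem_cons_of_mem _ hp)) a
    show ∑ b, ((if (a = u ∧ b = w) ∨ (a = w ∧ b = u) then step c L u w else 0) +
        mat c t (bump c L u w) a b) = loads c t (bump c L u w) a - L a
    rw [Finset.sum_add_distrib, IH]
    have key : ∑ b, (if (a = u ∧ b = w) ∨ (a = w ∧ b = u) then step c L u w else 0)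
        = bump c L u w a - L a := by
      by_cases hau : a = u
      · have hne : a ≠ w := hau ▸ huw
        have hcond : ∀ b, ((a = u ∧ b = w) ∨ (a = w ∧ b = u)) ↔ b = w := by
          intro b
          constructor
          · rintro (⟨_, h⟩ | ⟨h1, _⟩)
            · exact h
            · exact absurd h1 hne
          · intro h; exact Or.inl ⟨hau, h⟩
        simp only [hcond]
        rw [Finset.sum_ite_eq' Finset.univ w fun _ => step c L u w,
          if_pos (Finset.mem_univ _)]
        unfold bump
        rw [if_pos hau, if_neg hne]
        ring
      by_cases haw : a = w
      · have hcond : ∀ b, ((a = u ∧ b = w) ∨ (a = w ∧ b = u)) ↔ b = u := by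
          intro b
          constructor
          · rintro (⟨h1, _⟩ | ⟨_, h⟩)
            · exact absurd h1 hau
            · exact h
          · intro h; exact Or.inr ⟨haw, h⟩
        simp only [hcond]
        rw [Finset.sum_ite_eq' Finset.univ u fun _ => step c L u w,
          if_pos (Finset.mem_univ _)]
        unfold bump
        rw [if_neg hau, if_pos haw]
        ring
      · have hcond : ∀ b, ¬ ((a = u ∧ b = w) ∨ (a = w ∧ b = u)) := by
          rintro b (⟨h, _⟩ | ⟨h, _⟩)
          · exact hau h
          · exact haw h
        simp only [if_neg (hcond _), Finset.sum_const_zero]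
        unfold bump
        rw [if_neg hau, if_neg haw]
        ring
    rw [key]
    ring

lemma loads_tight {c : V → ℝ} :
    ∀ (l : List (V × V)) (L : V → ℝ), (∀ p ∈ l, p.1 ≠ p.2) → (∀ v, L v ≤ c v) →
      ∀ p ∈ l, loads c l L p.1 = c p.1 ∨ loads c l L p.2 = c p.2
  | [], L, _, _, p, hp => absurd hp List.not_mem_nil
  | (u, w) :: t, L, hl, hL, p, hp => by
    have huw : u ≠ w := hl (u, w) (List.mem_cons_self)
    have hl' : ∀ p ∈ t, p.1 ≠ p.2 := fun p hp => hl p (List.mem_cons_of_mem _ hp)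
    have hbump := bump_le huw hL
    rcases List.mem_cons.mp hp with rfl | hpt
    · show loads c ((u, w) :: t) L u = c u ∨ loads c ((u, w) :: t) L w = c w
      show loads c t (bump c L u w) u = c u ∨ loads c t (bump c L u w) w = c w
      rcases le_total (c u - L u) (c w - L w) with h | h
      · left
        have hstep : step c L u w = c u - L u := min_eq_left h
        have hbu : bump c L u w u = c u := by
          simp [bump, huw, hstep]
        exact le_antisymm (loads_le t _ hl' hbump u)
          (by rw [← hbu]; exact le_loads t _ hl' hbump u)
      · right
        have hstep : step c L u w = c w - L w := min_eq_right h
        have hbw : bump c L u w w = c w := by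
          simp [bump, huw.symm, hstep]
        exact le_antisymm (loads_le t _ hl' hbump w)
          (by rw [← hbw]; exact le_loads t _ hl' hbump w)
    · exact loads_tight t (bump c L u w) hl' hbump p hpt

/-- In any valid profile, a mafioso's utility is at most `-min (D v) (c v)`. -/
lemma mafioso_utility_le (G : SimpleGraph V) [DecidableRel G.Adj] (c : V → ℝ) (T : ℝ)
    (hc : ∀ v, 0 ≤ c v) (M : Finset V) (r : V → V → ℝ) (hval : ValidProfile G c M r)
    (v : V) (hv : v ∈ M) :
    utility G c T M r v ≤ -min (demand M r v) (c v) := by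
  unfold utility
  rw [if_pos hv]
  have hsum : (∑ u ∈ G.neighborFinset v,
      if u ∈ M ∧ c u < demand M r u then (c u / demand M r u) * r v u else r v u) ≤ c v := by
    rw [← hval.2.2 v hv]
    refine Finset.sum_le_sum fun u _ => ?_
    by_cases h : u ∈ M ∧ c u < demand M r u
    · rw [if_pos h]
      have hD : 0 < demand M r u := lt_of_le_of_lt (hc u) h.2
      have h1 : c u / demand M r u ≤ 1 := (div_le_one hD).2 h.2.le
      calc (c u / demand M r u) * r v u ≤ 1 * r v u :=
            mul_le_mul_of_nonneg_right h1 (hval.1 v u)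
        _ = r v u := one_mul _
    · rw [if_neg h]
  linarith

/-- A unilateral deviation of `v` does not change the demand on `v`. -/
lemma demand_deviation (G : SimpleGraph V) [DecidableRel G.Adj] (c : V → ℝ)
    (M M' : Finset V) (r r' : V → V → ℝ) (hval : ValidProfile G c M r)
    (hval' : ValidProfile G c M' r') (v : V) (hdev : Deviation v M M' r r') :
    demand M' r' v = demand M r v := by
  unfold demand
  have hrv : r v v = 0 := hval.2.1 v v (Or.inr (G.irrefl))
  have hrv' : r' v v = 0 := hval'.2.1 v v (Or.inr (G.irrefl))
  rw [← Finset.sum_erase (f := fun u => r' u v) M' hrv', ← Finset.sum_erase (f := fun u => r u v) M hrv]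
  have hMM : M'.erase v = M.erase v := by
    ext u
    simp only [Finset.mem_erase]
    exact and_congr_right fun hu => hdev.1 u hu
  rw [hMM]
  exact Finset.sum_congr rfl fun u hu => hdev.2 u v (Finset.mem_erase.mp hu).1

/-- the Mafia Vertex Cover Game always has a pure Nash equilibrium. -/
theorem stmt_3 (G : SimpleGraph V) [DecidableRel G.Adj] (c : V → ℝ)
    (hc : ∀ v, 0 ≤ c v) (T : ℝ) (hT : 2 * ∑ v, c v < T) :
    ∃ (M : Finset V) (r : V → V → ℝ), IsNashEq G c T M r := by
  classical
  set l : List (V × V) := (Finset.univ.filter fun p : V × V => G.Adj p.1 p.2).toList with hldef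
  have hlmem : ∀ p : V × V, p ∈ l ↔ G.Adj p.1 p.2 := by
    intro p
    rw [hldef, Finset.mem_toList, Finset.mem_filter]
    simp
  have hlne : ∀ p ∈ l, p.1 ≠ p.2 := fun p hp => ((hlmem p).mp hp).ne
  set L0 : V → ℝ := fun _ => 0 with hL0def
  have hL0 : ∀ v, L0 v ≤ c v := fun v => hc v
  set y : V → V → ℝ := mat c l L0 with hydef
  set Lf : V → ℝ := loads c l L0 with hLfdef
  have hy0 : ∀ a b, 0 ≤ y a b := mat_nonneg l L0 hlne hL0
  have hysym : ∀ a b, y a b = y b a := mat_symm l L0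
  have hysupp : ∀ a b, ¬ G.Adj a b → y a b = 0 := by
    intro a b hab
    refine mat_support l L0 a b fun p hp => ?_
    have hadj := (hlmem p).mp hp
    constructor
    · rintro rfl; exact hab hadj
    · rintro rfl; exact hab (G.adj_symm hadj)
  have hrowy : ∀ a, ∑ b, y a b = Lf a := by
    intro a
    have := mat_rowsum (c := c) l L0 hlne a
    simpa [hL0def] using this
  have hLfle : ∀ v, Lf v ≤ c v := loads_le l L0 hlne hL0
  have hcov : ∀ {u w}, G.Adj u w → Lf u = c u ∨ Lf w = c w := by
    intro u w h
    exact loads_tight l L0 hlne hL0 (u, w) ((hlmem (u, w)).mpr h)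
  set M : Finset V := Finset.univ.filter fun v => Lf v = c v with hMdef
  have hMmem : ∀ v, v ∈ M ↔ Lf v = c v := by
    intro v; rw [hMdef, Finset.mem_filter]; simp
  set r : V → V → ℝ := fun u w => if u ∈ M then y u w else 0 with hrdef
  have hr0 : ∀ u w, 0 ≤ r u w := by
    intro u w; rw [hrdef]; dsimp only
    split
    · exact hy0 u w
    · exact le_rfl
  have hrsupp : ∀ u w, u ∉ M ∨ ¬ G.Adj u w → r u w = 0 := by
    intro u w h
    rw [hrdef]; dsimp only
    rcases h with h | h
    · rw [if_neg h]
    · split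
      · exact hysupp u w h
      · rfl
  have hrrow : ∀ u ∈ M, ∑ w ∈ G.neighborFinset u, r u w = c u := by
    intro u hu
    have h1 : ∑ w ∈ G.neighborFinset u, r u w = ∑ w, r u w := by
      refine Finset.sum_subset (Finset.subset_univ _) ?_
      intro w _ hw
      exact hrsupp u w (Or.inr fun hadj => hw ((G.mem_neighborFinset u w).mpr hadj))
    have h2 : ∑ w, r u w = ∑ w, y u w := by
      refine Finset.sum_congr rfl fun w _ => ?_
      rw [hrdef]; dsimp only; rw [if_pos hu]
    rw [h1, h2, hrowy u]
    exact (hMmem u).mp hu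
  have hvalid : ValidProfile G c M r := ⟨hr0, hrsupp, hrrow⟩
  have hD : ∀ v, demand M r v ≤ c v := by
    intro v
    have h1 : demand M r v ≤ ∑ u, y u v := by
      unfold demand
      calc ∑ u ∈ M, r u v = ∑ u ∈ M, y u v := by
            refine Finset.sum_congr rfl fun u hu => ?_
            rw [hrdef]; dsimp only; rw [if_pos hu]
        _ ≤ ∑ u, y u v :=
            Finset.sum_le_sum_of_subset_of_nonneg (Finset.subset_univ _)
              fun u _ _ => hy0 u v
    have h2 : ∑ u, y u v = Lf v := by
      rw [← hrowy v]
      exact Finset.sum_congr rfl fun u _ => hysym u v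
    calc demand M r v ≤ Lf v := by rw [← h2]; exact h1
      _ ≤ c v := hLfle v
  have hcover : ∀ {u w}, G.Adj u w → u ∈ M ∨ w ∈ M := by
    intro u w h
    rcases hcov h with h1 | h1
    · exact Or.inl ((hMmem u).mpr h1)
    · exact Or.inr ((hMmem w).mpr h1)
  refine ⟨M, r, hvalid, ?_⟩
  intro v M' r' hval' hdev
  have hdem : demand M' r' v = demand M r v :=
    demand_deviation G c M M' r r' hvalid hval' v hdev
  have hcsum : (0:ℝ) ≤ ∑ v, c v := Finset.sum_nonneg fun v _ => hc v
  have hT0 : 0 < T := by linarith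
  by_cases hv : v ∈ M
  · -- original mafioso
    have horig : utility G c T M r v = -min (demand M r v) (c v) := by
      unfold utility
      rw [if_pos hv]
      have hF : (∑ u ∈ G.neighborFinset v,
          if u ∈ M ∧ c u < demand M r u then (c u / demand M r u) * r v u else r v u)
          = ∑ u ∈ G.neighborFinset v, r v u := by
        refine Finset.sum_congr rfl fun u _ => ?_
        rw [if_neg]
        rintro ⟨_, hlt⟩
        exact absurd (hD u) (not_le.mpr hlt)
      rw [hF, hrrow v hv]
      ring
    by_cases hv' : v ∈ M'
    · calc utility G c T M' r' v ≤ -min (demand M' r' v) (c v) :=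
            mafioso_utility_le G c T hc M' r' hval' v hv'
        _ = -min (demand M r v) (c v) := by rw [hdem]
        _ = utility G c T M r v := horig.symm
    · have hu' : utility G c T M' r' v
          = -demand M r v - (if ∃ u ∈ G.neighborFinset v, u ∉ M' then T else 0) := by
        unfold utility
        rw [if_neg hv', hdem]
      rw [hu', horig]
      have h1 : min (demand M r v) (c v) ≤ demand M r v := min_le_left _ _
      have h2 : (0:ℝ) ≤ if ∃ u ∈ G.neighborFinset v, u ∉ M' then T else 0 := by
        split
        · exact hT0.le
        · exact le_rfl
      linarith
  · -- original civilian
    have hpen : ¬ ∃ u ∈ G.neighborFinset v, u ∉ M := by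
      rintro ⟨u, hu, hum⟩
      rcases hcover ((G.mem_neighborFinset v u).mp hu) with h | h
      · exact hv h
      · exact hum h
    have horig : utility G c T M r v = -demand M r v := by
      unfold utility
      rw [if_neg hv, if_neg hpen]
      ring
    by_cases hv' : v ∈ M'
    · calc utility G c T M' r' v ≤ -min (demand M' r' v) (c v) :=
            mafioso_utility_le G c T hc M' r' hval' v hv'
        _ = -min (demand M r v) (c v) := by rw [hdem]
        _ = -demand M r v := by rw [min_eq_left (hD v)]
        _ = utility G c T M r v := horig.symm
    · have hu' : utility G c T M' r' v
          = -demand M r v - (if ∃ u ∈ G.neighborFinset v, u ∉ M' then T else 0) := by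
        unfold utility
        rw [if_neg hv', hdem]
      rw [hu', horig]
      have h2 : (0:ℝ) ≤ if ∃ u ∈ G.neighborFinset v, u ∉ M' then T else 0 := by
        split
        · exact hT0.le
        · exact le_rfl
      linarith

end
end MafiaVC
end

section
/- Let the strategy profile (M, r) of the Mafia Vertex Cover Game be a pure Nash equilibrium. Then M is a vertex cover of G: every edge of E has at least one endpoint in M. -/
open Finset
open scoped Classical

namespace MafiaVC

variable {V : Type*} [Fintype V] [DecidableEq V]

noncomputable section

/-- in any pure Nash equilibrium `(M, r)` of the Mafia Vertex Cover Game,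
the Mafia `M` is a vertex cover. -/
theorem stmt_4 (G : SimpleGraph V) [DecidableRel G.Adj] (c : V → ℝ)
    (hc : ∀ v, 0 ≤ c v) (T : ℝ) (hT : 2 * ∑ v, c v < T)
    (M : Finset V) (r : V → V → ℝ)
    (hnash : IsNashEq G c T M r) :
    ∀ ⦃u w : V⦄, G.Adj u w → u ∈ M ∨ w ∈ M := by
  intro u w huw
  by_contra h
  push_neg at h
  obtain ⟨hu, hw⟩ := h
  obtain ⟨⟨hr0, hrz, hrs⟩, hne⟩ := hnash
  set M' : Finset V := insert u M with hM'
  set r' : V → V → ℝ := fun x y => if x = u then (if y = w then c u else 0) else r x y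
    with hr'
  have hvalid : ValidProfile G c M' r' := by
    refine ⟨?_, ?_, ?_⟩
    · intro a b
      simp only [hr']
      split_ifs
      · exact hc u
      · exact le_refl 0
      · exact hr0 a b
    · intro a b hab
      simp only [hr']
      split_ifs with h1 h2
      · rw [h1, h2] at hab
        rcases hab with h | h
        · exact absurd (mem_insert_self u M) h
        · exact absurd huw h
      · rfl
      · apply hrz
        rcases hab with h | h
        · exact Or.inl fun hm => h (mem_insert_of_mem hm)
        · exact Or.inr h
    · intro a ha
      by_cases hau : a = u
      · rw [hau]
        simp only [hr', if_pos rfl]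
        rw [Finset.sum_ite_eq' (G.neighborFinset u) w (fun _ => c u)]
        simp [SimpleGraph.mem_neighborFinset, huw]
      · have haM : a ∈ M := by
          rcases Finset.mem_insert.mp ha with h | h
          · exact absurd h hau
          · exact h
        rw [← hrs a haM]
        exact Finset.sum_congr rfl fun b _ => by simp [hr', hau]
  have hdev : Deviation u M M' r r' := by
    constructor
    · intro a hau; simp [hM', Finset.mem_insert, hau]
    · intro a b hau; simp [hr', hau]
  have hle := hne u M' r' hvalid hdev
  have hD0 : 0 ≤ demand M r u := Finset.sum_nonneg fun x _ => hr0 x u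
  have hD'0 : ∀ x, 0 ≤ demand M' r' x :=
    fun x => Finset.sum_nonneg fun y _ => hvalid.1 y x
  have hold : utility G c T M r u = -demand M r u - T := by
    rw [utility, if_neg hu,
      if_pos ⟨w, (SimpleGraph.mem_neighborFinset _ _ _).mpr huw, hw⟩]
  have hS : 0 ≤ ∑ x ∈ G.neighborFinset u,
      (if x ∈ M' ∧ c x < demand M' r' x then (c x / demand M' r' x) * r' u x
       else r' u x) := by
    apply Finset.sum_nonneg
    intro x _
    split_ifs with hx
    · exact mul_nonneg (div_nonneg (hc x) (hD'0 x)) (hvalid.1 u x)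
    · exact hvalid.1 u x
  have hnew : -c u - c u ≤ utility G c T M' r' u := by
    rw [utility, if_pos (mem_insert_self u M)]
    have hmin := min_le_right (demand M' r' u) (c u)
    linarith
  have hcu : c u ≤ ∑ v, c v := Finset.single_le_sum (fun v _ => hc v) (mem_univ u)
  linarith

end
end MafiaVC
end

section
/- Let the strategy profile (M, r) of the Mafia Vertex Cover Game be a pure Nash equilibrium. Then there are no protected mafiosi, i.e., D(v) ≤ c(v) for every v ∈ M. -/
open Finset
open scoped Classical

namespace MafiaVC

variable {V : Type*} [Fintype V] [DecidableEq V]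

noncomputable section

/-- In a Nash equilibrium, any payer of a protected mafioso is itself a protected mafioso. -/
lemma payer_protected (G : SimpleGraph V) [DecidableRel G.Adj] (c : V → ℝ)
    (hc : ∀ v, 0 ≤ c v) (T : ℝ) (M : Finset V) (r : V → V → ℝ)
    (hnash : IsNashEq G c T M r) (v : V) (hvM : v ∈ M)
    (hv : c v < demand M r v) (u : V) (hru : 0 < r u v) :
    u ∈ M ∧ c u < demand M r u := by
  obtain ⟨⟨hr0, hrz, hrsum⟩, hbr⟩ := hnash
  have huM : u ∈ M := by
    by_contra h
    have := hrz u v (Or.inl h); linarith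
  have hadj : G.Adj u v := by
    by_contra h
    have := hrz u v (Or.inr h); linarith
  have huv : u ≠ v := G.ne_of_adj hadj
  have hDv : 0 < demand M r v := lt_of_le_of_lt (hc v) hv
  have hvN : v ∈ G.neighborFinset u := by rwa [SimpleGraph.mem_neighborFinset]
  have hruu : r u u = 0 := hrz u u (Or.inr (G.irrefl))
  have hrho : c v / demand M r v < 1 := (div_lt_one hDv).2 hv
  have hgain : c v / demand M r v * r u v < r u v :=
    mul_lt_of_lt_one_left hru hrho
  -- Step 1: every neighbour of `u` is a mafioso.
  have key : ∀ w ∈ G.neighborFinset u, w ∈ M := by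
    by_contra hk
    push_neg at hk
    obtain ⟨w, hwN, hwM⟩ := hk
    have hadjw : G.Adj u w := by rwa [SimpleGraph.mem_neighborFinset] at hwN
    have huw : u ≠ w := G.ne_of_adj hadjw
    have hvw : v ≠ w := fun h => hwM (h ▸ hvM)
    set r' : V → V → ℝ := fun x y =>
      if x = u ∧ y = v then 0 else if x = u ∧ y = w then r u w + r u v else r x y with hr'
    have hr'ne : ∀ x y, x ≠ u → r' x y = r x y := by
      intro x y hx; simp [hr', hx]
    have hr'uv : r' u v = 0 := by simp [hr']
    have hr'uw : r' u w = r u w + r u v := by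
      have : ¬ (w = v) := Ne.symm hvw
      simp [hr', this]
    have hr'uy : ∀ y, y ≠ v → y ≠ w → r' u y = r u y := by
      intro y h1 h2; simp [hr', h1, h2]
    have hdem : ∀ y, y ≠ v → y ≠ w → demand M r' y = demand M r y := by
      intro y h1 h2
      refine Finset.sum_congr rfl fun x _ => ?_
      by_cases hxu : x = u
      · subst hxu; exact hr'uy y h1 h2
      · exact hr'ne x y hxu
    have hdemu : demand M r' u = demand M r u := hdem u huv huw
    have hvalid' : ValidProfile G c M r' := by
      refine ⟨?_, ?_, ?_⟩
      · intro x y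
        simp only [hr']
        split_ifs with h1 h2
        · exact le_refl 0
        · exact add_nonneg (hr0 u w) (hr0 u v)
        · exact hr0 x y
      · intro x y hxy
        simp only [hr']
        split_ifs with h1 h2
        · rfl
        · exfalso
          obtain ⟨hxu, hyw⟩ := h2
          subst hxu; subst hyw
          rcases hxy with h | h
          · exact h huM
          · exact h hadjw
        · exact hrz x y hxy
      · intro x hxM
        by_cases hxu : x = u
        · rw [hxu]
          have hsplit : ∀ y ∈ G.neighborFinset u,
              r' u y = r u y + (if y = w then r u v else 0) - (if y = v then r u v else 0) := by
            intro y _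
            by_cases h1 : y = v
            · rw [h1, hr'uv, if_neg hvw, if_pos rfl]
              ring
            · by_cases h2 : y = w
              · rw [h2, hr'uw, if_pos rfl, if_neg (Ne.symm hvw)]
                ring
              · rw [hr'uy y h1 h2, if_neg h2, if_neg h1]
                ring
          rw [Finset.sum_congr rfl hsplit, Finset.sum_sub_distrib, Finset.sum_add_distrib,
            Finset.sum_ite_eq' _ w, Finset.sum_ite_eq' _ v, if_pos hwN, if_pos hvN,
            hrsum u huM]
          ring
        · rw [Finset.sum_congr rfl fun y _ => hr'ne x y hxu]
          exact hrsum x hxM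
    have hdev : Deviation u M M r r' := ⟨fun z _ => Iff.rfl, fun x y hx => hr'ne x y hx⟩
    have hle := hbr u M r' hvalid' hdev
    have hterm : ∀ y ∈ G.neighborFinset u,
        (if y ∈ M ∧ c y < demand M r' y then c y / demand M r' y * r' u y else r' u y)
        = (if y ∈ M ∧ c y < demand M r y then c y / demand M r y * r u y else r u y)
          + (if y = w then r u v else 0)
          - (if y = v then c v / demand M r v * r u v else 0) := by
      intro y _
      by_cases h1 : y = v
      · rw [h1, hr'uv, if_neg hvw, if_pos rfl, if_pos (⟨hvM, hv⟩ : v ∈ M ∧ c v < demand M r v)]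
        simp
      · by_cases h2 : y = w
        · have hcond : ¬ (w ∈ M ∧ c w < demand M r' w) := fun h => hwM h.1
          have hcond' : ¬ (w ∈ M ∧ c w < demand M r w) := fun h => hwM h.1
          rw [h2, hr'uw, if_neg hcond, if_neg hcond', if_pos rfl, if_neg (Ne.symm hvw)]
          ring
        · rw [hr'uy y h1 h2, hdem y h1 h2, if_neg h2, if_neg h1]
          ring
    rw [utility, utility, if_pos huM, if_pos huM, hdemu,
      Finset.sum_congr rfl hterm, Finset.sum_sub_distrib, Finset.sum_add_distrib,
      Finset.sum_ite_eq' _ w, Finset.sum_ite_eq' _ v, if_pos hwN, if_pos hvN] at hle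
    linarith
  -- Step 2: the "become a civilian" deviation forces `c u < demand M r u`.
  refine ⟨huM, ?_⟩
  set M' := M.erase u with hM'
  set r' : V → V → ℝ := fun x y => if x = u then 0 else r x y with hr'
  have hr'ne : ∀ x y, x ≠ u → r' x y = r x y := by
    intro x y hx; simp [hr', hx]
  have hvalid' : ValidProfile G c M' r' := by
    refine ⟨?_, ?_, ?_⟩
    · intro x y
      simp only [hr']
      split_ifs
      · exact le_refl 0
      · exact hr0 x y
    · intro x y hxy
      by_cases hxu : x = u
      · simp [hr', hxu]
      · rw [hr'ne x y hxu]
        refine hrz x y ?_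
        rcases hxy with h | h
        · exact Or.inl fun hxM => h (Finset.mem_erase.mpr ⟨hxu, hxM⟩)
        · exact Or.inr h
    · intro x hx
      obtain ⟨hxu, hxM⟩ := Finset.mem_erase.mp hx
      rw [Finset.sum_congr rfl fun y _ => hr'ne x y hxu]
      exact hrsum x hxM
  have hdev : Deviation u M M' r r' := by
    constructor
    · intro z hz
      simp [hM', Finset.mem_erase, hz]
    · intro x y hx
      exact hr'ne x y hx
  have hle := hbr u M' r' hvalid' hdev
  have huM' : u ∉ M' := Finset.notMem_erase u M
  have hdem' : demand M' r' u = demand M r u := by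
    have h1 : ∀ y ∈ M', r' y u = r y u := fun y hy =>
      hr'ne y u (Finset.mem_erase.mp hy).1
    rw [demand, Finset.sum_congr rfl h1]
    exact Finset.sum_erase (f := fun y => r y u) M hruu
  have hpen : ¬ ∃ x ∈ G.neighborFinset u, x ∉ M' := by
    rintro ⟨x, hxN, hxM'⟩
    have hadjx : G.Adj u x := by rwa [SimpleGraph.mem_neighborFinset] at hxN
    exact hxM' (Finset.mem_erase.mpr ⟨(G.ne_of_adj hadjx).symm, key x hxN⟩)
  rw [utility, utility, if_neg huM', if_pos huM, hdem', if_neg hpen] at hle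
  -- bound the old gross refund
  have htermle : ∀ y ∈ (G.neighborFinset u).erase v,
      (if y ∈ M ∧ c y < demand M r y then c y / demand M r y * r u y else r u y) ≤ r u y := by
    intro y _
    split_ifs with h
    · obtain ⟨-, hy⟩ := h
      have hd : 0 < demand M r y := lt_of_le_of_lt (hc y) hy
      exact mul_le_of_le_one_left (hr0 u y) ((div_le_one hd).2 hy.le)
    · exact le_refl _
  have hsum1 : r u v + ∑ y ∈ (G.neighborFinset u).erase v, r u y = c u := by
    rw [Finset.add_sum_erase _ _ hvN]
    exact hrsum u huM
  have hsplit :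
      (∑ y ∈ G.neighborFinset u,
        if y ∈ M ∧ c y < demand M r y then c y / demand M r y * r u y else r u y)
      = (c v / demand M r v * r u v)
        + ∑ y ∈ (G.neighborFinset u).erase v,
            (if y ∈ M ∧ c y < demand M r y then c y / demand M r y * r u y else r u y) := by
    rw [← Finset.add_sum_erase _ _ hvN, if_pos (⟨hvM, hv⟩ : v ∈ M ∧ c v < demand M r v)]
  have hbound : (∑ y ∈ G.neighborFinset u,
      if y ∈ M ∧ c y < demand M r y then c y / demand M r y * r u y else r u y)
      ≤ c u - r u v + c v / demand M r v * r u v := by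
    rw [hsplit]
    have := Finset.sum_le_sum htermle
    linarith
  rcases le_or_gt (demand M r u) (c u) with h | h
  · exfalso
    have hmin : min (demand M r u) (c u) = demand M r u := min_eq_left h
    linarith
  · exact h

/-- in any pure Nash equilibrium `(M, r)` of the Mafia Vertex Cover Game there
are no protected mafiosi, i.e. `D v ≤ c v` for every mafioso `v`. -/
theorem stmt_5 (G : SimpleGraph V) [DecidableRel G.Adj] (c : V → ℝ)
    (hc : ∀ v, 0 ≤ c v) (T : ℝ) (hT : 2 * ∑ v, c v < T)
    (M : Finset V) (r : V → V → ℝ)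
    (hnash : IsNashEq G c T M r) :
    ∀ v ∈ M, demand M r v ≤ c v := by
  by_contra hcon
  push_neg at hcon
  obtain ⟨v₀, hv₀M, hv₀⟩ := hcon
  obtain ⟨hr0, hrz, hrsum⟩ := hnash.1
  set P : Finset V := M.filter fun v => c v < demand M r v with hP
  have hPsub : P ⊆ M := Finset.filter_subset _ _
  have hv₀P : v₀ ∈ P := Finset.mem_filter.mpr ⟨hv₀M, hv₀⟩
  have h1 : ∑ v ∈ P, c v < ∑ v ∈ P, demand M r v :=
    Finset.sum_lt_sum_of_nonempty ⟨v₀, hv₀P⟩ fun v hv => (Finset.mem_filter.mp hv).2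
  have h2 : ∑ v ∈ P, demand M r v = ∑ u ∈ M, ∑ v ∈ P, r u v := by
    simp only [demand]
    exact Finset.sum_comm
  have h3 : ∀ u ∈ M, u ∉ P → ∑ v ∈ P, r u v = 0 := by
    intro u huM huP
    refine Finset.sum_eq_zero fun v hv => ?_
    by_contra hne
    have hpos : 0 < r u v := lt_of_le_of_ne (hr0 u v) (Ne.symm hne)
    obtain ⟨hvM, hvD⟩ := Finset.mem_filter.mp hv
    obtain ⟨huM', hu⟩ := payer_protected G c hc T M r hnash v hvM hvD u hpos
    exact huP (Finset.mem_filter.mpr ⟨huM', hu⟩)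
  have h4 : ∀ u ∈ P, ∑ v ∈ P, r u v ≤ c u := by
    intro u huP
    have huM : u ∈ M := hPsub huP
    have heq : ∑ v ∈ P.filter (· ∈ G.neighborFinset u), r u v = ∑ v ∈ P, r u v := by
      refine Finset.sum_filter_of_ne fun v _ hne => ?_
      rw [SimpleGraph.mem_neighborFinset]
      by_contra hnadj
      exact hne (hrz u v (Or.inr hnadj))
    have hle : ∑ v ∈ P.filter (· ∈ G.neighborFinset u), r u v
        ≤ ∑ v ∈ G.neighborFinset u, r u v := by
      refine Finset.sum_le_sum_of_subset_of_nonneg ?_ fun v _ _ => hr0 u v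
      intro x hx
      exact (Finset.mem_filter.mp hx).2
    rw [← heq]
    calc ∑ v ∈ P.filter (· ∈ G.neighborFinset u), r u v
        ≤ ∑ v ∈ G.neighborFinset u, r u v := hle
      _ = c u := hrsum u huM
  have h5 : ∑ u ∈ M, ∑ v ∈ P, r u v = ∑ u ∈ P, ∑ v ∈ P, r u v :=
    (Finset.sum_subset hPsub fun u hu hnu => h3 u hu hnu).symm
  have h6 : ∑ u ∈ P, ∑ v ∈ P, r u v ≤ ∑ u ∈ P, c u := Finset.sum_le_sum h4
  linarith

end
end MafiaVC
end

section
/- Let the strategy profile (M, r) of the Mafia Vertex Cover Game be a pure Nash equilibrium and let v be a civilian (v ∈ V∖M). Then D(v) ≤ 2·c(v). -/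
open Finset
open scoped Classical

namespace MafiaVC

variable {V : Type*} [Fintype V] [DecidableEq V]

noncomputable section

/-- in any pure Nash equilibrium `(M, r)` of the Mafia Vertex Cover Game, every
civilian `v` satisfies `D v ≤ 2 c v`. -/
theorem stmt_6 (G : SimpleGraph V) [DecidableRel G.Adj] (c : V → ℝ)
    (hc : ∀ v, 0 ≤ c v) (T : ℝ) (hT : 2 * ∑ v, c v < T)
    (M : Finset V) (r : V → V → ℝ)
    (hnash : IsNashEq G c T M r)
    (v : V) (hv : v ∉ M) :
    demand M r v ≤ 2 * c v := by
  obtain ⟨⟨hr0, hrz, hrs⟩, hne⟩ := hnash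
  by_contra hD
  push_neg at hD
  have hcv : 0 ≤ c v := hc v
  have hDpos : 0 < demand M r v := by linarith
  obtain ⟨u, huM, hru⟩ : ∃ u ∈ M, r u v ≠ 0 := by
    by_contra h
    push_neg at h
    have : demand M r v = 0 := Finset.sum_eq_zero fun x hx => h x hx
    linarith
  have hadj : G.Adj u v := by
    by_contra h
    exact hru (hrz u v (Or.inr h))
  have hu_nb : u ∈ G.neighborFinset v := by
    simpa [SimpleGraph.mem_neighborFinset] using hadj.symm
  set M' := insert v M with hM'
  set r' : V → V → ℝ := fun a b => if a = v then (if b = u then c v else 0) else r a b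
    with hr'
  have hvalid : ValidProfile G c M' r' := by
    refine ⟨?_, ?_, ?_⟩
    · intro a b
      by_cases ha : a = v
      · simp only [hr', ha, if_true]
        split <;> simp [hc]
      · simpa [hr', ha] using hr0 a b
    · intro a b hab
      by_cases ha : a = v
      · simp only [hr', ha, if_true]
        rcases hab with h | h
        · rw [ha] at h
          exact absurd (Finset.mem_insert_self v M) h
        · have hbu : b ≠ u := by
            rintro rfl
            rw [ha] at h
            exact h hadj.symm
          simp [hbu]
      · simp only [hr', ha, if_false]
        refine hrz a b ?_
        rcases hab with h | h
        · exact Or.inl fun hm => h (Finset.mem_insert_of_mem hm)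
        · exact Or.inr h
    · intro a ha
      by_cases hav : a = v
      · subst hav
        simp only [hr', if_true]
        rw [Finset.sum_ite_eq' (G.neighborFinset a) u (fun _ => c a)]
        simp [hu_nb]
      · have haM : a ∈ M := by
          rcases Finset.mem_insert.mp ha with h | h
          · exact absurd h hav
          · exact h
        have := hrs a haM
        simpa [hr', hav] using this
  have hdev : Deviation v M M' r r' := by
    constructor
    · intro a ha
      simp [hM', Finset.mem_insert, ha]
    · intro a b ha
      simp [hr', ha]
  have hle := hne v M' r' hvalid hdev
  have hvM' : v ∈ M' := Finset.mem_insert_self v M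
  have hSnn : 0 ≤ ∑ u' ∈ G.neighborFinset v,
      (if u' ∈ M' ∧ c u' < demand M' r' u' then (c u' / demand M' r' u') * r' v u'
       else r' v u') := by
    refine Finset.sum_nonneg fun w hw => ?_
    split
    · next h =>
      have hd : 0 ≤ demand M' r' w := le_of_lt (lt_of_le_of_lt (hc w) h.2)
      exact mul_nonneg (div_nonneg (hc w) hd) (hvalid.1 v w)
    · exact hvalid.1 v w
  have hmin : min (demand M' r' v) (c v) ≤ c v := min_le_right _ _
  have hnew : -2 * c v ≤ utility G c T M' r' v := by
    rw [utility, if_pos hvM']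
    linarith
  have hT0 : 0 ≤ T := by
    have : 0 ≤ ∑ w, c w := Finset.sum_nonneg fun w _ => hc w
    linarith
  have hpen : 0 ≤ (if ∃ u ∈ G.neighborFinset v, u ∉ M then T else 0) := by
    split <;> linarith
  have hold : utility G c T M r v ≤ -demand M r v := by
    rw [utility, if_neg hv]
    linarith
  linarith

end
end MafiaVC
end

section
/- Let the strategy profile (M, r) of the Mafia Vertex Cover Game be a pure Nash equilibrium. Then M is a vertex cover of G and ∑_{v∈M} c(v) ≤ 2·∑_{v∈M*} c(v) for every vertex cover M* of G; that is, the price of anarchy of the Mafia Vertex Cover Game is at most 2. -/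
set_option linter.unusedSectionVars false


open Finset
open scoped Classical

namespace MafiaVC

variable {V : Type*} [Fintype V] [DecidableEq V]

noncomputable section

/-! ### Auxiliary lemmas -/

lemma demand_nonneg {M : Finset V} {r : V → V → ℝ} (hr : ∀ u w, 0 ≤ r u w) (v : V) :
    0 ≤ demand M r v :=
  Finset.sum_nonneg fun u _ => hr u v

lemma utility_mafioso_ge (G : SimpleGraph V) [DecidableRel G.Adj] {c : V → ℝ}
    (hc : ∀ v, 0 ≤ c v) (T : ℝ) {M : Finset V} {r : V → V → ℝ}
    (hr : ∀ u w, 0 ≤ r u w) {v : V} (hv : v ∈ M) :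
    -(2 * c v) ≤ utility G c T M r v := by
  simp only [utility, if_pos hv]
  have h1 : (0:ℝ) ≤ ∑ u ∈ G.neighborFinset v,
      (if u ∈ M ∧ c u < demand M r u then (c u / demand M r u) * r v u else r v u) := by
    refine Finset.sum_nonneg fun u _ => ?_
    split
    · exact mul_nonneg (div_nonneg (hc u) (demand_nonneg hr u)) (hr v u)
    · exact hr v u
  have h2 : min (demand M r v) (c v) ≤ c v := min_le_right _ _
  linarith

lemma exists_mafioso_dev (G : SimpleGraph V) [DecidableRel G.Adj] {c : V → ℝ}
    {M : Finset V} {r : V → V → ℝ} (hc : ∀ v, 0 ≤ c v)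
    (hvalid : ValidProfile G c M r) {u y : V} (hadj : G.Adj u y) :
    ∃ r' : V → V → ℝ, ValidProfile G c (insert u M) r' ∧ Deviation u M (insert u M) r r' := by
  obtain ⟨hr, hr0, hrsum⟩ := hvalid
  refine ⟨fun a b => if a = u then (if b = y then c u else 0) else r a b, ⟨?_, ?_, ?_⟩, ?_, ?_⟩
  · intro a b; dsimp only
    split
    · split
      · exact hc u
      · exact le_refl 0
    · exact hr a b
  · intro a b hab; dsimp only
    by_cases ha : a = u
    · subst ha
      rcases hab with h | h
      · exact absurd (Finset.mem_insert_self a M) h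
      · rw [if_pos rfl, if_neg]
        intro hb; subst hb; exact h hadj
    · rw [if_neg ha]
      refine hr0 a b ?_
      rcases hab with h | h
      · exact Or.inl fun hm => h (Finset.mem_insert_of_mem hm)
      · exact Or.inr h
  · intro a ha; dsimp only
    by_cases hau : a = u
    · subst hau
      have hstep : ∀ b, (if a = a then (if b = y then c a else 0) else r a b)
          = (if b = y then c a else 0) := fun b => if_pos rfl
      rw [Finset.sum_congr rfl fun b _ => hstep b, Finset.sum_ite_eq' (G.neighborFinset a) y
        (fun _ => c a), if_pos ((SimpleGraph.mem_neighborFinset _ _ _).mpr hadj)]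
    · have hstep : ∀ b, (if a = u then (if b = y then c u else 0) else r a b) = r a b :=
        fun b => if_neg hau
      rw [Finset.sum_congr rfl fun b _ => hstep b]
      exact hrsum a ((Finset.mem_insert.mp ha).resolve_left hau)
  · intro a ha
    simp [Finset.mem_insert, ha]
  · intro a b ha
    exact if_neg ha

lemma mem_nbr {G : SimpleGraph V} [DecidableRel G.Adj] {v w : V} :
    w ∈ G.neighborFinset v ↔ G.Adj v w := SimpleGraph.mem_neighborFinset _ _ _

lemma nash_cover (G : SimpleGraph V) [DecidableRel G.Adj] {c : V → ℝ}
    (hc : ∀ v, 0 ≤ c v) {T : ℝ} (hT : 2 * ∑ v, c v < T)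
    {M : Finset V} {r : V → V → ℝ} (hnash : IsNashEq G c T M r) :
    ∀ ⦃u w : V⦄, G.Adj u w → u ∈ M ∨ w ∈ M := by
  intro u w hadj
  by_contra hcon
  push_neg at hcon
  obtain ⟨hu, hw⟩ := hcon
  obtain ⟨r', hvalid', hdev⟩ := exists_mafioso_dev G hc hnash.1 hadj
  have hle := hnash.2 u _ _ hvalid' hdev
  have h1 : -(2 * c u) ≤ utility G c T (insert u M) r' u :=
    utility_mafioso_ge G hc T hvalid'.1 (Finset.mem_insert_self u M)
  have h2 : utility G c T M r u = -demand M r u - T := by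
    simp only [utility, if_neg hu]
    rw [if_pos ⟨w, mem_nbr.mpr hadj, hw⟩]
  have h3 : 0 ≤ demand M r u := demand_nonneg hnash.1.1 u
  have h4 : c u ≤ ∑ v, c v := Finset.single_le_sum (fun v _ => hc v) (Finset.mem_univ u)
  rw [h2] at hle
  linarith

lemma nash_civ_bound (G : SimpleGraph V) [DecidableRel G.Adj] {c : V → ℝ}
    (hc : ∀ v, 0 ≤ c v) {T : ℝ} (hT : 2 * ∑ v, c v < T)
    {M : Finset V} {r : V → V → ℝ} (hnash : IsNashEq G c T M r) :
    ∀ u, u ∉ M → demand M r u ≤ 2 * c u := by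
  have hcover := nash_cover G hc hT hnash
  intro u hu
  by_cases hnb : ∃ y, G.Adj u y
  · obtain ⟨y, hadj⟩ := hnb
    obtain ⟨r', hvalid', hdev⟩ := exists_mafioso_dev G hc hnash.1 hadj
    have hle := hnash.2 u _ _ hvalid' hdev
    have h1 : -(2 * c u) ≤ utility G c T (insert u M) r' u :=
      utility_mafioso_ge G hc T hvalid'.1 (Finset.mem_insert_self u M)
    have hpen : ¬ ∃ x ∈ G.neighborFinset u, x ∉ M := by
      rintro ⟨x, hxN, hxM⟩
      rcases hcover (mem_nbr.mp hxN) with h | h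
      · exact hu h
      · exact hxM h
    have h2 : utility G c T M r u = -demand M r u - 0 := by
      simp only [utility, if_neg hu]
      rw [if_neg hpen]
    rw [h2] at hle
    linarith
  · push_neg at hnb
    have hd : demand M r u = 0 :=
      Finset.sum_eq_zero fun w _ => hnash.1.2.1 w u (Or.inr fun h => hnb w h.symm)
    rw [hd]
    have := hc u
    linarith

lemma nash_no_protected (G : SimpleGraph V) [DecidableRel G.Adj] {c : V → ℝ}
    (hc : ∀ v, 0 ≤ c v) {T : ℝ}
    {M : Finset V} {r : V → V → ℝ} (hnash : IsNashEq G c T M r) :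
    ∀ u ∈ M, demand M r u ≤ c u := by
  obtain ⟨⟨hr, hr0, hrsum⟩, hne⟩ := hnash
  set P : Finset V := M.filter (fun u => c u < demand M r u) with hPdef
  -- anyone paying into P receives strictly less than his cost
  have hFlt : ∀ w ∈ M, ∀ u ∈ P, 0 < r w u →
      (∑ x ∈ G.neighborFinset w,
        if x ∈ M ∧ c x < demand M r x then (c x / demand M r x) * r w x else r w x) < c w := by
    intro w hw u hu hrwu
    rw [hPdef, Finset.mem_filter] at hu
    obtain ⟨huM, hulf⟩ := hu
    have hadj : G.Adj w u := by
      by_contra h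
      have := hr0 w u (Or.inr h); linarith
    have hDu : 0 < demand M r u := lt_of_le_of_lt (hc u) hulf
    have hsum := hrsum w hw
    rw [← hsum]
    refine Finset.sum_lt_sum (fun x _ => ?_) ⟨u, mem_nbr.mpr hadj, ?_⟩
    · split
      · rename_i hcond
        have hDx : 0 < demand M r x := lt_of_le_of_lt (hc x) hcond.2
        have h1 : c x / demand M r x ≤ 1 := (div_le_one hDx).mpr (le_of_lt hcond.2)
        calc (c x / demand M r x) * r w x ≤ 1 * r w x :=
              mul_le_mul_of_nonneg_right h1 (hr w x)
          _ = r w x := one_mul _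
      · exact le_refl _
    · rw [if_pos ⟨huM, hulf⟩]
      have h1 : c u / demand M r u < 1 := (div_lt_one hDu).mpr hulf
      calc (c u / demand M r u) * r w u < 1 * r w u := mul_lt_mul_of_pos_right h1 hrwu
        _ = r w u := one_mul _
  -- anyone paying into P is himself in P
  have stepA : ∀ w ∈ M, ∀ u ∈ P, 0 < r w u → w ∈ P := by
    intro w hw u hu hrwu
    have hF := hFlt w hw u hu hrwu
    by_cases hciv : ∃ x ∈ G.neighborFinset w, x ∉ M
    · -- impossible: redirect all ransom to a civilian neighbor
      exfalso
      obtain ⟨x, hxN, hxM⟩ := hciv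
      have hadjx : G.Adj w x := mem_nbr.mp hxN
      set r'' : V → V → ℝ := fun a b => if a = w then (if b = x then c w else 0) else r a b
        with hr''def
      have hwx : w ≠ x := fun h => hxM (h ▸ hw)
      have hvalid'' : ValidProfile G c M r'' := by
        refine ⟨?_, ?_, ?_⟩
        · intro a b; simp only [hr''def]
          split
          · split
            · exact hc w
            · exact le_refl 0
          · exact hr a b
        · intro a b hab; simp only [hr''def]
          by_cases ha : a = w
          · subst ha
            rcases hab with h | h
            · exact absurd hw h
            · rw [if_pos rfl, if_neg]
              intro hb; subst hb; exact h hadjx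
          · rw [if_neg ha]; exact hr0 a b hab
        · intro a ha; simp only [hr''def]
          by_cases haw : a = w
          · subst haw
            have hstep : ∀ b, (if a = a then (if b = x then c a else 0) else r a b)
                = (if b = x then c a else 0) := fun b => if_pos rfl
            rw [Finset.sum_congr rfl fun b _ => hstep b,
              Finset.sum_ite_eq' (G.neighborFinset a) x (fun _ => c a), if_pos hxN]
          · have hstep : ∀ b, (if a = w then (if b = x then c w else 0) else r a b) = r a b :=
              fun b => if_neg haw
            rw [Finset.sum_congr rfl fun b _ => hstep b]
            exact hrsum a ha
      have hdev'' : Deviation w M M r r'' := by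
        refine ⟨fun a _ => Iff.rfl, fun a b hab => ?_⟩
        simp only [hr''def]; rw [if_neg hab]
      have hle := hne w M r'' hvalid'' hdev''
      have hDsame : demand M r'' w = demand M r w := by
        refine Finset.sum_congr rfl fun y hy => ?_
        simp only [hr''def]
        by_cases hyw : y = w
        · subst hyw
          rw [if_pos rfl, if_neg hwx, hr0 y y (Or.inr (G.irrefl))]
        · rw [if_neg hyw]
      have hF'' : (∑ z ∈ G.neighborFinset w,
          if z ∈ M ∧ c z < demand M r'' z then (c z / demand M r'' z) * r'' w z else r'' w z)
          = c w := by
        have hstep : ∀ z ∈ G.neighborFinset w,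
            (if z ∈ M ∧ c z < demand M r'' z then (c z / demand M r'' z) * r'' w z else r'' w z)
            = (if z = x then c w else 0) := by
          intro z _
          by_cases hzx : z = x
          · subst hzx
            have hval : r'' w z = c w := by simp [hr''def]
            rw [if_pos rfl, if_neg (fun hcond => hxM hcond.1), hval]
          · have hz : r'' w z = 0 := by simp [hr''def, hzx]
            rw [if_neg hzx, hz]
            split
            · exact mul_zero _
            · rfl
        rw [Finset.sum_congr rfl hstep,
          Finset.sum_ite_eq' (G.neighborFinset w) x (fun _ => c w), if_pos hxN]
      simp only [utility, if_pos hw, hF'', hDsame] at hle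
      linarith
    · -- otherwise become a civilian; conclude w ∈ P
      push_neg at hciv
      by_contra hwP
      have hDw : demand M r w ≤ c w := by
        rw [hPdef, Finset.mem_filter] at hwP
        push_neg at hwP
        exact hwP hw
      set r'' : V → V → ℝ := fun a b => if a = w then 0 else r a b with hr''def
      have hvalid'' : ValidProfile G c (M.erase w) r'' := by
        refine ⟨?_, ?_, ?_⟩
        · intro a b; simp only [hr''def]
          split
          · exact le_refl 0
          · exact hr a b
        · intro a b hab; simp only [hr''def]
          by_cases ha : a = w
          · rw [if_pos ha]
          · rw [if_neg ha]
            refine hr0 a b ?_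
            rcases hab with h | h
            · exact Or.inl fun hm => h (Finset.mem_erase.mpr ⟨ha, hm⟩)
            · exact Or.inr h
        · intro a ha; simp only [hr''def]
          obtain ⟨haw, haM⟩ := Finset.mem_erase.mp ha
          have hstep : ∀ b, (if a = w then 0 else r a b) = r a b := fun b => if_neg haw
          rw [Finset.sum_congr rfl fun b _ => hstep b]
          exact hrsum a haM
      have hdev'' : Deviation w M (M.erase w) r r'' := by
        refine ⟨fun a ha => ?_, fun a b hab => ?_⟩
        · constructor
          · exact fun h => (Finset.mem_erase.mp h).2
          · exact fun h => Finset.mem_erase.mpr ⟨ha, h⟩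
        · simp only [hr''def]; rw [if_neg hab]
      have hle := hne w _ r'' hvalid'' hdev''
      have hwM'' : w ∉ M.erase w := Finset.notMem_erase w M
      have hpen : ¬ ∃ x ∈ G.neighborFinset w, x ∉ M.erase w := by
        rintro ⟨x, hxN, hx⟩
        refine hx (Finset.mem_erase.mpr ⟨?_, hciv x hxN⟩)
        intro h
        exact G.irrefl (h ▸ mem_nbr.mp hxN)
      have hDnew : demand (M.erase w) r'' w = demand M r w := by
        have h1 : ∀ y ∈ M.erase w, r'' y w = r y w := fun y hy =>
          if_neg (Finset.mem_erase.mp hy).1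
        show (∑ y ∈ M.erase w, r'' y w) = ∑ y ∈ M, r y w
        rw [Finset.sum_congr rfl h1]
        exact Finset.sum_erase _ (hr0 w w (Or.inr (G.irrefl)))
      simp only [utility, if_pos hw, if_neg hwM'', hDnew] at hle
      rw [if_neg hpen, min_eq_left hDw] at hle
      linarith
  -- sum up: money into P comes only from P
  intro u huM
  by_contra hgt
  push_neg at hgt
  have huP : u ∈ P := by rw [hPdef, Finset.mem_filter]; exact ⟨huM, hgt⟩
  have hPsub : P ⊆ M := by rw [hPdef]; exact Finset.filter_subset _ _
  have key : ∑ x ∈ P, demand M r x ≤ ∑ x ∈ P, c x := by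
    have h1 : ∑ x ∈ P, demand M r x = ∑ w ∈ M, ∑ x ∈ P, r w x := by
      simp only [demand]
      exact Finset.sum_comm
    rw [h1]
    have h2 : ∀ w ∈ M, (∑ x ∈ P, r w x) ≤ (if w ∈ P then c w else 0) := by
      intro w hw
      by_cases hwP : w ∈ P
      · rw [if_pos hwP]
        calc ∑ x ∈ P, r w x ≤ ∑ x ∈ Finset.univ, r w x :=
              Finset.sum_le_sum_of_subset_of_nonneg (Finset.subset_univ _) fun i _ _ => hr w i
          _ = ∑ x ∈ G.neighborFinset w, r w x :=
              (Finset.sum_subset (Finset.subset_univ _) fun x _ hx =>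
                hr0 w x (Or.inr fun ha => hx (mem_nbr.mpr ha))).symm
          _ = c w := hrsum w hw
      · rw [if_neg hwP]
        refine le_of_eq (Finset.sum_eq_zero fun x hx => ?_)
        by_contra hne0
        have hpos : 0 < r w x := lt_of_le_of_ne (hr w x) (Ne.symm hne0)
        exact hwP (stepA w hw x hx hpos)
    calc ∑ w ∈ M, ∑ x ∈ P, r w x ≤ ∑ w ∈ M, (if w ∈ P then c w else 0) :=
          Finset.sum_le_sum h2
      _ = ∑ w ∈ M.filter (· ∈ P), c w := (Finset.sum_filter _ _).symm
      _ = ∑ w ∈ P, c w := by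
          rw [Finset.filter_mem_eq_inter, Finset.inter_eq_right.mpr hPsub]
  have hstrict : ∑ x ∈ P, c x < ∑ x ∈ P, demand M r x :=
    Finset.sum_lt_sum_of_nonempty ⟨u, huP⟩ fun x hx => by
      rw [hPdef, Finset.mem_filter] at hx; exact hx.2
  linarith

/-- in any pure Nash equilibrium `(M, r)` of the Mafia Vertex Cover Game,
`M` is a vertex cover and its cost is at most twice the cost of any vertex cover
(price of anarchy at most 2). -/
theorem stmt_7 (G : SimpleGraph V) [DecidableRel G.Adj] (c : V → ℝ)
    (hc : ∀ v, 0 ≤ c v) (T : ℝ) (hT : 2 * ∑ v, c v < T)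
    (M : Finset V) (r : V → V → ℝ)
    (hnash : IsNashEq G c T M r) :
    (∀ ⦃u w : V⦄, G.Adj u w → u ∈ M ∨ w ∈ M) ∧
      ∀ Mstar : Finset V, (∀ ⦃u w : V⦄, G.Adj u w → u ∈ Mstar ∨ w ∈ Mstar) →
        ∑ v ∈ M, c v ≤ 2 * ∑ v ∈ Mstar, c v := by
  obtain ⟨⟨hr, hr0, hrsum⟩, -⟩ := id hnash
  have hcover := nash_cover G hc hT hnash
  refine ⟨hcover, fun Mstar hMstar => ?_⟩
  have hciv := nash_civ_bound G hc hT hnash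
  have hprot := nash_no_protected G hc hnash
  have hDle : ∀ u, demand M r u ≤ 2 * c u - (if u ∈ M then c u else 0) := by
    intro u
    by_cases hu : u ∈ M
    · rw [if_pos hu]
      have h1 := hprot u hu
      have h2 := hc u
      linarith
    · rw [if_neg hu]
      have h1 := hciv u hu
      linarith
  have hsplit : ∑ v ∈ M ∩ Mstar, c v + ∑ v ∈ M \ Mstar, c v = ∑ v ∈ M, c v :=
    Finset.sum_inter_add_sum_sdiff M Mstar c
  have hpart : ∑ v ∈ M \ Mstar, c v ≤ ∑ u ∈ Mstar, demand M r u := by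
    have h1 : ∀ v ∈ M \ Mstar, c v = ∑ u ∈ Mstar, r v u := by
      intro v hv
      obtain ⟨hvM, hvS⟩ := Finset.mem_sdiff.mp hv
      rw [← hrsum v hvM]
      refine Finset.sum_subset ?_ ?_
      · intro x hx
        rcases hMstar (mem_nbr.mp hx) with h | h
        · exact absurd h hvS
        · exact h
      · intro x _ hx
        exact hr0 v x (Or.inr fun ha => hx (mem_nbr.mpr ha))
    calc ∑ v ∈ M \ Mstar, c v = ∑ v ∈ M \ Mstar, ∑ u ∈ Mstar, r v u :=
          Finset.sum_congr rfl h1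
      _ = ∑ u ∈ Mstar, ∑ v ∈ M \ Mstar, r v u := Finset.sum_comm
      _ ≤ ∑ u ∈ Mstar, demand M r u := by
          refine Finset.sum_le_sum fun u _ => ?_
          show (∑ v ∈ M \ Mstar, r v u) ≤ ∑ v ∈ M, r v u
          exact Finset.sum_le_sum_of_subset_of_nonneg Finset.sdiff_subset fun i _ _ => hr i u
  have hbound : ∑ u ∈ Mstar, demand M r u
      ≤ ∑ u ∈ Mstar, (2 * c u - (if u ∈ M then c u else 0)) :=
    Finset.sum_le_sum fun u _ => hDle u
  have hinter : ∑ v ∈ M ∩ Mstar, c v = ∑ u ∈ Mstar, (if u ∈ M then c u else 0) := by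
    rw [Finset.inter_comm, ← Finset.filter_mem_eq_inter, Finset.sum_filter]
  have hsum2 : ∑ u ∈ Mstar, (2 * c u - (if u ∈ M then c u else 0))
      = 2 * ∑ u ∈ Mstar, c u - ∑ u ∈ Mstar, (if u ∈ M then c u else 0) := by
    rw [Finset.sum_sub_distrib, Finset.mul_sum]
  linarith


end
end MafiaVC
end

section
/- Suppose the strategy profile (M, r) of the Mafia Vertex Cover Game satisfies D(u) ≤ c(u) for every u ∈ V and r(u,w) = r(w,u) whenever u, w ∈ M. Let v be a civilian incident to at least one uncovered edge (an edge both of whose endpoints are civilians) such that c(v) − D(v) ≤ c(u) − D(u) for every civilian u incident to an uncovered edge. Let v change his strategy by joining the Mafia with any nonnegative ransom vector r' satisfying r'(v,u) = r(u,v) for every mafioso neighbor u of v, r'(v,z) = 0 for mafioso non-neighbors, r'(v,z) ≥ 0 arbitrary on civilian neighbors, and ∑_{w : vw∈E} r'(v,w) = c(v). Then: (i) in the resulting profile the demands D'(u) satisfy D'(u) ≤ c(u) for every u ∈ V, and ransoms between mafiosi remain symmetric; (ii) this move is a best response of v with respect to the lexicographic utility (U, Ũ): v attains U(v) = −D(v)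 and Ũ(v) = 0, and no strategy of v yields a lexicographically larger pair. -/
open Finset
open scoped Classical

namespace MafiaVC

variable {V : Type*} [Fintype V] [DecidableEq V]

noncomputable section

/-- The secondary utility `Ũ(v)`: zero for civilians, and
`-∑_{u∈N(v)∩M} |r(u,v) - r(v,u)|` for a mafioso `v`. -/
def utility2 (G : SimpleGraph V) [DecidableRel G.Adj]
    (M : Finset V) (r : V → V → ℝ) (v : V) : ℝ :=
  if v ∈ M then -∑ u ∈ G.neighborFinset v ∩ M, |r u v - r v u| else 0

/-- suppose the profile `(M, r)` satisfies `D u ≤ c u` for every `u` and has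
symmetric ransoms between mafiosi.  Let `v` be a civilian incident to an uncovered edge,
minimizing `c v - D v` among such civilians, and let `v` join the Mafia with a ransom
vector `r'` that mirrors the ransoms of his mafioso neighbors (`r'(v,u) = r(u,v)`), vanishes
on non-neighbors, is nonnegative, and sums to `c v`.  Then (i) in the new profile all
demands stay below the budgets and ransoms between mafiosi remain symmetric, and (ii) the
move is a best response for the lexicographic utility `(U, Ũ)`: `v` attains `U(v) = -D(v)`
and `Ũ(v) = 0`, and no unilateral deviation of `v` yields a lexicographically larger pair. -/
theorem stmt_8 (G : SimpleGraph V) [DecidableRel G.Adj] (c : V → ℝ)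
    (hc : ∀ v, 0 ≤ c v) (T : ℝ) (hT : 2 * ∑ v, c v < T)
    (M : Finset V) (r : V → V → ℝ)
    (hvalid : ValidProfile G c M r)
    (hdem : ∀ u, demand M r u ≤ c u)
    (hsym : ∀ u ∈ M, ∀ w ∈ M, r u w = r w u)
    (v : V) (hv : v ∉ M)
    (hunc : ∃ u, G.Adj v u ∧ u ∉ M)
    (hmin : ∀ u, u ∉ M → (∃ w, G.Adj u w ∧ w ∉ M) →
      c v - demand M r v ≤ c u - demand M r u)
    (r' : V → V → ℝ)
    (hr'old : ∀ u w, u ≠ v → r' u w = r u w)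
    (hr'nn : ∀ w, 0 ≤ r' v w)
    (hr'maf : ∀ u ∈ M, G.Adj v u → r' v u = r u v)
    (hr'zero : ∀ w, ¬ G.Adj v w → r' v w = 0)
    (hr'sum : ∑ w ∈ G.neighborFinset v, r' v w = c v) :
    ((∀ u, demand (insert v M) r' u ≤ c u) ∧
        ∀ u ∈ insert v M, ∀ w ∈ insert v M, r' u w = r' w u) ∧
      (utility G c T (insert v M) r' v = -demand M r v ∧
        utility2 G (insert v M) r' v = 0 ∧
        ∀ (M'' : Finset V) (r'' : V → V → ℝ),
          ValidProfile G c M'' r'' → Deviation v M M'' r r'' →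
            utility G c T M'' r'' v < utility G c T (insert v M) r' v ∨
              (utility G c T M'' r'' v = utility G c T (insert v M) r' v ∧
                utility2 G M'' r'' v ≤ utility2 G (insert v M) r' v)) := by
  classical
  obtain ⟨hrnn, hrzero, hrsum⟩ := hvalid
  have hTnn : 0 ≤ T :=
    le_of_lt (lt_of_le_of_lt (mul_nonneg (by norm_num)
      (Finset.sum_nonneg fun i _ => hc i)) hT)
  have hvv : ¬ G.Adj v v := G.irrefl
  -- new demand formula
  have hdemand_new : ∀ u, demand (insert v M) r' u = r' v u + demand M r u := by
    intro u
    rw [demand, demand, Finset.sum_insert hv]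
    congr 1
    exact Finset.sum_congr rfl fun w hw =>
      hr'old w u (fun h => hv (h ▸ hw))
  -- demand on v comes from mafia neighbors only
  have hDv_eq : demand M r v = ∑ w ∈ G.neighborFinset v ∩ M, r w v := by
    rw [demand]
    symm
    apply Finset.sum_subset Finset.inter_subset_right
    intro w hwM hw
    refine hrzero w v (Or.inr fun hadj => hw ?_)
    exact Finset.mem_inter.mpr ⟨(SimpleGraph.mem_neighborFinset _ _ _).mpr hadj.symm, hwM⟩
  have hmirror : ∑ w ∈ G.neighborFinset v ∩ M, r' v w = demand M r v := by
    rw [hDv_eq]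
    refine Finset.sum_congr rfl fun w hw => ?_
    obtain ⟨h1, h2⟩ := Finset.mem_inter.mp hw
    exact hr'maf w h2 ((SimpleGraph.mem_neighborFinset _ _ _).mp h1)
  -- bound on ransom to civilian neighbors
  have hbound : ∀ u, u ∉ M → G.Adj v u → r' v u ≤ c v - demand M r v := by
    intro u huM hadj
    have huN : u ∈ G.neighborFinset v := (SimpleGraph.mem_neighborFinset _ _ _).mpr hadj
    have huI : u ∉ G.neighborFinset v ∩ M := fun h => huM (Finset.mem_inter.mp h).2
    have hsub : insert u (G.neighborFinset v ∩ M) ⊆ G.neighborFinset v := by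
      intro w hw
      rcases Finset.mem_insert.mp hw with h | h
      · exact h ▸ huN
      · exact Finset.inter_subset_left h
    have hsum : ∑ w ∈ insert u (G.neighborFinset v ∩ M), r' v w ≤ c v := by
      rw [← hr'sum]
      exact Finset.sum_le_sum_of_subset_of_nonneg hsub fun w _ _ => hr'nn w
    rw [Finset.sum_insert huI, hmirror] at hsum
    linarith
  -- (A1) all demands stay below budgets
  have hkey : ∀ u, demand (insert v M) r' u ≤ c u := by
    intro u
    rw [hdemand_new]
    by_cases huM : u ∈ M
    · by_cases hadj : G.Adj v u
      · -- mafioso neighbor: r' v u = r u v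
        have hDu : demand M r u = ∑ w ∈ G.neighborFinset u ∩ M, r u w := by
          rw [demand]
          rw [Finset.sum_congr rfl fun w hw => hsym w hw u huM]
          symm
          apply Finset.sum_subset Finset.inter_subset_right
          intro w hwM hw
          refine hrzero u w (Or.inr fun hadj' => hw ?_)
          exact Finset.mem_inter.mpr ⟨(SimpleGraph.mem_neighborFinset _ _ _).mpr hadj', hwM⟩
        have hvN : v ∈ G.neighborFinset u := (SimpleGraph.mem_neighborFinset _ _ _).mpr hadj.symm
        have hvI : v ∉ G.neighborFinset u ∩ M := fun h => hv (Finset.mem_inter.mp h).2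
        have hsub : insert v (G.neighborFinset u ∩ M) ⊆ G.neighborFinset u := by
          intro w hw
          rcases Finset.mem_insert.mp hw with h | h
          · exact h ▸ hvN
          · exact Finset.inter_subset_left h
        have hsum2 : ∑ w ∈ insert v (G.neighborFinset u ∩ M), r u w ≤ c u := by
          rw [← hrsum u huM]
          exact Finset.sum_le_sum_of_subset_of_nonneg hsub fun w _ _ => hrnn u w
        rw [Finset.sum_insert hvI] at hsum2
        rw [hr'maf u huM hadj, hDu]
        linarith
      · rw [hr'zero u hadj]
        simpa using hdem u
    · by_cases hadj : G.Adj v u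
      · have h1 := hbound u huM hadj
        have h2 := hmin u huM ⟨v, hadj.symm, hv⟩
        linarith
      · rw [hr'zero u hadj]
        simpa using hdem u
  -- (A2) symmetry
  have hsym' : ∀ u ∈ insert v M, ∀ w ∈ insert v M, r' u w = r' w u := by
    have aux : ∀ w ∈ M, r' v w = r' w v := by
      intro w hwM
      have hwv : w ≠ v := fun h => hv (h ▸ hwM)
      rw [hr'old w v hwv]
      by_cases hadj : G.Adj v w
      · exact hr'maf w hwM hadj
      · rw [hr'zero w hadj, hrzero w v (Or.inr fun h => hadj h.symm)]
    intro u hu w hw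
    rcases Finset.mem_insert.mp hu with hu' | hu' <;>
      rcases Finset.mem_insert.mp hw with hw' | hw'
    · rw [hu', hw']
    · rw [hu']; exact aux w hw'
    · rw [hw']; exact (aux u hu').symm
    · have huv : u ≠ v := fun h => hv (h ▸ hu')
      have hwv : w ≠ v := fun h => hv (h ▸ hw')
      rw [hr'old u w huv, hr'old w u hwv]
      exact hsym u hu' w hw'
  -- new demand on v equals old
  have hD'v : demand (insert v M) r' v = demand M r v := by
    rw [hdemand_new, hr'zero v hvv, zero_add]
  -- (B1) utility of v in the new profile
  have hU : utility G c T (insert v M) r' v = -demand M r v := by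
    rw [utility, if_pos (Finset.mem_insert_self v M)]
    have hS : (∑ u ∈ G.neighborFinset v,
        if u ∈ insert v M ∧ c u < demand (insert v M) r' u
          then (c u / demand (insert v M) r' u) * r' v u else r' v u) = c v := by
      rw [← hr'sum]
      refine Finset.sum_congr rfl fun u _ => ?_
      exact if_neg fun h => absurd h.2 (not_lt.mpr (hkey u))
    rw [hS, hD'v, min_eq_left (hdem v)]
    ring
  -- (B2) secondary utility
  have hU2 : utility2 G (insert v M) r' v = 0 := by
    rw [utility2, if_pos (Finset.mem_insert_self v M)]
    rw [neg_eq_zero]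
    refine Finset.sum_eq_zero fun u hu => ?_
    obtain ⟨h1, h2⟩ := Finset.mem_inter.mp hu
    have hadj : G.Adj v u := (SimpleGraph.mem_neighborFinset _ _ _).mp h1
    have huv : u ≠ v := fun h => hvv (h ▸ hadj)
    have huM : u ∈ M := by
      rcases Finset.mem_insert.mp h2 with h | h
      · exact absurd h huv
      · exact h
    rw [hr'old u v huv, hr'maf u huM hadj, sub_self, abs_zero]
  refine ⟨⟨hkey, hsym'⟩, hU, hU2, ?_⟩
  -- (B3) best response
  intro M'' r'' hvalid'' hdev''
  obtain ⟨hrnn'', hrzero'', hrsum''⟩ := hvalid''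
  obtain ⟨hdevM, hdevr⟩ := hdev''
  have hMe : M''.erase v = M := by
    ext u
    simp only [Finset.mem_erase]
    constructor
    · rintro ⟨h1, h2⟩; exact (hdevM u h1).mp h2
    · intro h
      have huv : u ≠ v := fun he => hv (he ▸ h)
      exact ⟨huv, (hdevM u huv).mpr h⟩
  have hDeq : demand M'' r'' v = demand M r v := by
    rw [demand, demand, ← Finset.sum_erase (f := fun u => r'' u v) M'' (hrzero'' v v (Or.inr hvv)), hMe]
    refine Finset.sum_congr rfl fun u hu => ?_
    exact hdevr u v fun h => hv (h ▸ hu)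
  have hle : utility G c T M'' r'' v ≤ -demand M r v := by
    rw [utility]
    by_cases hvM'' : v ∈ M''
    · rw [if_pos hvM'']
      have hS : (∑ u ∈ G.neighborFinset v,
          if u ∈ M'' ∧ c u < demand M'' r'' u
            then (c u / demand M'' r'' u) * r'' v u else r'' v u)
          ≤ c v := by
        rw [← hrsum'' v hvM'']
        refine Finset.sum_le_sum fun u _ => ?_
        split_ifs with h
        · have hpos : 0 < demand M'' r'' u := lt_of_le_of_lt (hc u) h.2
          have hdiv : c u / demand M'' r'' u ≤ 1 :=
            (div_le_one hpos).mpr (le_of_lt h.2)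
          calc (c u / demand M'' r'' u) * r'' v u ≤ 1 * r'' v u :=
                mul_le_mul_of_nonneg_right hdiv (hrnn'' v u)
            _ = r'' v u := one_mul _
        · exact le_refl _
      rw [hDeq, min_eq_left (hdem v)]
      linarith
    · rw [if_neg hvM'']
      obtain ⟨u, hadj, huM⟩ := hunc
      have huv : u ≠ v := fun h => hvv (h ▸ hadj)
      have huM'' : u ∉ M'' := fun h => huM ((hdevM u huv).mp h)
      have hex : ∃ u ∈ G.neighborFinset v, u ∉ M'' :=
        ⟨u, (SimpleGraph.mem_neighborFinset _ _ _).mpr hadj, huM''⟩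
      rw [if_pos hex, hDeq]
      linarith
  rw [hU]
  rcases lt_or_eq_of_le hle with h | h
  · exact Or.inl h
  · refine Or.inr ⟨h, ?_⟩
    rw [hU2, utility2]
    split_ifs with h'
    · rw [neg_nonpos]
      exact Finset.sum_nonneg fun u _ => abs_nonneg _
    · exact le_refl _

end
end MafiaVC
end

section
/- For every finite d-uniform hypergraph (V, 𝓔) (every hyperedge has exactly d elements, d ≥ 2) with a nonnegative cost function c : V → ℝ, there exists a complementary pair (M, y); that is, there exist a hitting set M and a feasible dual solution y such that every v ∈ M is tight for y. -/
open Finset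

lemma stmt_10_aux {V : Type*} [Fintype V] [DecidableEq V] :
    ∀ (E : Finset (Finset V)), (∀ S ∈ E, S.Nonempty) →
    ∀ (c : V → ℝ), (∀ v, 0 ≤ c v) →
    ∃ (M : Finset V) (y : Finset V → ℝ),
      (∀ S ∈ E, (M ∩ S).Nonempty) ∧
      (∀ S, 0 ≤ y S) ∧
      (∀ v : V, ∑ S ∈ E.filter (fun S => v ∈ S), y S ≤ c v) ∧
      (∀ v ∈ M, ∑ S ∈ E.filter (fun S => v ∈ S), y S = c v) := by
  classical
  intro E
  induction E using Finset.strongInduction with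
  | _ E ih =>
    intro hne c hc
    rcases E.eq_empty_or_nonempty with rfl | ⟨S, hSE⟩
    · exact ⟨∅, fun _ => 0, by simp, fun _ => le_refl 0, by simpa using hc, by simp⟩
    have hS : S.Nonempty := hne S hSE
    obtain ⟨v₀, hv₀S, hv₀⟩ := S.exists_mem_eq_inf' hS c
    set t := S.inf' hS c with ht
    have ht0 : 0 ≤ t := hv₀ ▸ hc v₀
    set c' : V → ℝ := fun v => c v - if v ∈ S then t else 0 with hc'def
    have hc' : ∀ v, 0 ≤ c' v := by
      intro v
      simp only [hc'def]
      split_ifs with h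
      · have := Finset.inf'_le c h
        linarith
      · simpa using hc v
    obtain ⟨M', y', h1, h2, h3, h4⟩ :=
      ih (E.erase S) (Finset.erase_ssubset hSE)
        (fun T hT => hne T (Finset.mem_of_mem_erase hT)) c' hc'
    refine ⟨insert v₀ M', fun T => if T = S then t else y' T, ?_, ?_, ?_, ?_⟩
    -- key sum identity
    · intro T hT
      by_cases hTS : T = S
      · exact ⟨v₀, Finset.mem_inter.2 ⟨Finset.mem_insert_self _ _, hTS ▸ hv₀S⟩⟩
      · obtain ⟨w, hw⟩ := h1 T (Finset.mem_erase.2 ⟨hTS, hT⟩)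
        rw [Finset.mem_inter] at hw
        exact ⟨w, Finset.mem_inter.2 ⟨Finset.mem_insert_of_mem hw.1, hw.2⟩⟩
    · intro T
      dsimp only
      split_ifs with h
      · exact ht0
      · exact h2 T
    all_goals {
      have key : ∀ v : V, ∑ T ∈ E.filter (fun T => v ∈ T), (if T = S then t else y' T)
          = (∑ T ∈ (E.erase S).filter (fun T => v ∈ T), y' T) + (if v ∈ S then t else 0) := by
        intro v
        by_cases hv : v ∈ S
        · have hSf : S ∈ E.filter (fun T => v ∈ T) := Finset.mem_filter.2 ⟨hSE, hv⟩
          rw [if_pos hv, ← Finset.sum_erase_add _ _ hSf, Finset.filter_erase]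
          congr 1
          · refine Finset.sum_congr rfl fun T hT => ?_
            have hTS : T ≠ S := (Finset.mem_erase.1 hT).1
            simp [hTS]
          · simp
        · have hfe : E.filter (fun T => v ∈ T) = (E.erase S).filter (fun T => v ∈ T) := by
            rw [Finset.filter_erase]
            exact (Finset.erase_eq_of_notMem (by simp [hv])).symm
          rw [if_neg hv, add_zero, hfe]
          refine Finset.sum_congr rfl fun T hT => ?_
          have hTS : T ≠ S := (Finset.mem_erase.1 (Finset.mem_filter.1 hT).1).1
          simp [hTS]
      first
      | -- feasibility
        (intro v
         rw [key v]
         have := h3 v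
         simp only [hc'def] at this
         linarith)
      | -- tightness
        (intro v hv
         rw [key v]
         rcases Finset.mem_insert.1 hv with heq | hvM'
         · subst heq
           have hle : ∑ T ∈ (E.erase S).filter (fun T => v ∈ T), y' T ≤ c' v := h3 v
           have hge : 0 ≤ ∑ T ∈ (E.erase S).filter (fun T => v ∈ T), y' T :=
             Finset.sum_nonneg fun T _ => h2 T
           have hcv0 : c' v = 0 := by
             simp only [hc'def, if_pos hv₀S]
             linarith [hv₀.symm]
           have hz : ∑ T ∈ (E.erase S).filter (fun T => v ∈ T), y' T = 0 :=
             le_antisymm (hcv0 ▸ hle) hge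
           rw [hz, if_pos hv₀S]
           linarith [hv₀.symm]
         · have := h4 v hvM'
           simp only [hc'def] at this
           linarith)
    }

/-- for every finite `d`-uniform hypergraph (`d ≥ 2`) with nonnegative costs
there exists a complementary pair: a hitting set `M` and a feasible dual solution `y`
such that every `v ∈ M` is tight for `y`. -/
theorem stmt_10 {V : Type*} [Fintype V] [DecidableEq V]
    (d : ℕ) (hd : 2 ≤ d) (E : Finset (Finset V)) (hunif : ∀ S ∈ E, S.card = d)
    (c : V → ℝ) (hc : ∀ v, 0 ≤ c v) :
    ∃ (M : Finset V) (y : Finset V → ℝ),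
      (∀ S ∈ E, (M ∩ S).Nonempty) ∧
      (∀ S, 0 ≤ y S) ∧
      (∀ v : V, ∑ S ∈ E.filter (fun S => v ∈ S), y S ≤ c v) ∧
      (∀ v ∈ M, ∑ S ∈ E.filter (fun S => v ∈ S), y S = c v) := by
  refine stmt_10_aux E (fun S hS => ?_) c hc
  rw [← Finset.card_pos, hunif S hS]
  omega
end

section
/- Let (M, y) be a complementary pair for the d-uniform hypergraph (V, 𝓔) with costs c. Define the strategy profile of the Mafia Hitting Set Game in which M is the set of mafiosi, C = V∖M are civilians, and each mafioso m sets ransoms r(m,S) = y(S) for every club S containing m. Then this strategy profile is a pure Nash equilibrium. -/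
open Finset
open scoped Classical

namespace MafiaHS

variable {V : Type*} [Fintype V] [DecidableEq V]

noncomputable section

/-- The demand `D(v) = (1/(d-1)) ∑_{S ∋ v} ∑_{m ∈ (M∩S)∖{v}} r(m,S)` asked from agent `v`
in the Mafia Hitting Set Game. -/
def demand (d : ℕ) (E : Finset (Finset V)) (M : Finset V)
    (r : V → Finset V → ℝ) (v : V) : ℝ :=
  (1 / ((d : ℝ) - 1)) * ∑ S ∈ E.filter (fun S => v ∈ S), ∑ m ∈ (M ∩ S).erase v, r m S

/-- A valid strategy profile of the Mafia Hitting Set Game: ransoms are nonnegative,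
`r m S = 0` unless `m` is a mafioso belonging to the club `S ∈ 𝓔`, and every mafioso `m`
distributes exactly `c m` among the clubs containing him. -/
def ValidProfile (E : Finset (Finset V)) (c : V → ℝ)
    (M : Finset V) (r : V → Finset V → ℝ) : Prop :=
  (∀ m S, 0 ≤ r m S) ∧
  (∀ m S, m ∉ M ∨ m ∉ S ∨ S ∉ E → r m S = 0) ∧
  (∀ m ∈ M, ∑ S ∈ E.filter (fun S => m ∈ S), r m S = c m)

/-- Utility of agent `v` in the Mafia Hitting Set Game.  A mafioso gets
`-c v + F⁺(v) - F⁻(v)` with `F⁻(v) = min(D v, c v)` and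
`F⁺(v) = ∑_{S ∋ v} (r(v,S)/(d-1))·(|S∖(P∪{v})| + ∑_{u∈(S∩P)∖{v}} c u / D u)`,
where `P = {u ∈ M : D u > c u}` is the set of protected mafiosi.
A civilian gets `-D v` minus the penalty `T` if he belongs to an uncovered club. -/
def utility (d : ℕ) (E : Finset (Finset V)) (c : V → ℝ) (T : ℝ)
    (M : Finset V) (r : V → Finset V → ℝ) (v : V) : ℝ :=
  if v ∈ M then
    -c v +
      (∑ S ∈ E.filter (fun S => v ∈ S),
        (r v S / ((d : ℝ) - 1)) *
          ((((S.filter fun u => ¬(u ∈ M ∧ c u < demand d E M r u)).erase v).card : ℝ) +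
            ∑ u ∈ (S.filter fun u => u ∈ M ∧ c u < demand d E M r u).erase v,
              c u / demand d E M r u)) -
      min (demand d E M r v) (c v)
  else
    -demand d E M r v - (if ∃ S ∈ E, v ∈ S ∧ M ∩ S = ∅ then T else 0)

/-- `(M', r')` is a unilateral deviation of agent `v` from `(M, r)`:
all other agents keep their strategies. -/
def Deviation (v : V) (M M' : Finset V) (r r' : V → Finset V → ℝ) : Prop :=
  (∀ u, u ≠ v → (u ∈ M' ↔ u ∈ M)) ∧ ∀ u S, u ≠ v → r' u S = r u S

/-- `(M, r)` is a pure Nash equilibrium of the Mafia Hitting Set Game: a valid profile such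
that no agent can strictly increase his utility by a unilateral deviation. -/
def IsNashEq (d : ℕ) (E : Finset (Finset V)) (c : V → ℝ) (T : ℝ)
    (M : Finset V) (r : V → Finset V → ℝ) : Prop :=
  ValidProfile E c M r ∧
  ∀ (v : V) (M' : Finset V) (r' : V → Finset V → ℝ),
    ValidProfile E c M' r' → Deviation v M M' r r' →
      utility d E c T M' r' v ≤ utility d E c T M r v

/-- a complementary pair `(M, y)` yields a pure Nash equilibrium of the
Mafia Hitting Set Game, where `M` is the Mafia and each mafioso `m` demands `r(m,S) = y S`
on every club `S` containing him. -/
theorem stmt_11 (d : ℕ) (hd : 2 ≤ d) (E : Finset (Finset V))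
    (hunif : ∀ S ∈ E, S.card = d)
    (c : V → ℝ) (hc : ∀ v, 0 ≤ c v) (T : ℝ) (hT : 2 * ∑ v, c v < T)
    (M : Finset V) (y : Finset V → ℝ)
    (hM : ∀ S ∈ E, (M ∩ S).Nonempty)
    (hy0 : ∀ S, 0 ≤ y S)
    (hyfeas : ∀ v : V, ∑ S ∈ E.filter (fun S => v ∈ S), y S ≤ c v)
    (htight : ∀ v ∈ M, ∑ S ∈ E.filter (fun S => v ∈ S), y S = c v) :
    IsNashEq d E c T M (fun m S => if m ∈ M ∧ m ∈ S ∧ S ∈ E then y S else 0) := by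
  have hd2 : (2:ℝ) ≤ (d:ℝ) := by exact_mod_cast hd
  have hd0 : (0:ℝ) < (d:ℝ) - 1 := by linarith
  set r : V → Finset V → ℝ := fun m S => if m ∈ M ∧ m ∈ S ∧ S ∈ E then y S else 0 with hrdef
  -- validity of the profile
  have hvalid : ValidProfile E c M r := by
    refine ⟨?_, ?_, ?_⟩
    · intro m S
      simp only [hrdef]
      split
      · exact hy0 S
      · exact le_refl 0
    · intro m S h
      simp only [hrdef, ite_eq_right_iff]
      intro ⟨h1, h2, h3⟩
      rcases h with h | h | h <;> tauto
    · intro m hm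
      rw [← htight m hm]
      refine Finset.sum_congr rfl fun S hS => ?_
      rw [mem_filter] at hS
      simp [hrdef, hm, hS.1, hS.2]
  -- demand bound
  have hDle : ∀ v, demand d E M r v ≤ c v := by
    intro v
    have h1 : ∀ S ∈ E.filter (fun S => v ∈ S),
        ∑ m ∈ (M ∩ S).erase v, r m S ≤ ((d:ℝ)-1) * y S := by
      intro S hS
      rw [mem_filter] at hS
      have hsub : (M ∩ S).erase v ⊆ S.erase v := by
        intro m hm
        simp only [mem_erase, mem_inter] at hm ⊢
        exact ⟨hm.1, hm.2.2⟩
      have hcardn : ((M ∩ S).erase v).card ≤ d - 1 := by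
        have h2 := Finset.card_le_card hsub
        rwa [Finset.card_erase_of_mem hS.2, hunif S hS.1] at h2
      have hcard : (((M ∩ S).erase v).card : ℝ) ≤ (d:ℝ) - 1 := by
        have hd1 : 1 ≤ d := le_trans (by norm_num) hd
        calc (((M ∩ S).erase v).card : ℝ) ≤ ((d - 1 : ℕ) : ℝ) := by exact_mod_cast hcardn
          _ = (d:ℝ) - 1 := by push_cast [hd1]; ring
      have hsum : ∑ m ∈ (M ∩ S).erase v, r m S = (((M ∩ S).erase v).card : ℝ) * y S := by
        rw [Finset.sum_congr rfl (fun m hm => ?_), Finset.sum_const, nsmul_eq_mul]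
        simp only [mem_erase, mem_inter] at hm
        simp [hrdef, hm.2.1, hm.2.2, hS.1]
      rw [hsum]
      exact mul_le_mul_of_nonneg_right hcard (hy0 S)
    calc demand d E M r v
        ≤ (1/((d:ℝ)-1)) * ∑ S ∈ E.filter (fun S => v ∈ S), ((d:ℝ)-1) * y S := by
          unfold demand
          exact mul_le_mul_of_nonneg_left (Finset.sum_le_sum h1) (by positivity)
      _ = ∑ S ∈ E.filter (fun S => v ∈ S), y S := by
          rw [← Finset.mul_sum, ← mul_assoc]
          field_simp
      _ ≤ c v := hyfeas v
  -- demand invariance under deviation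
  have hDdev : ∀ (v : V) (M' : Finset V) (r' : V → Finset V → ℝ),
      Deviation v M M' r r' → demand d E M' r' v = demand d E M r v := by
    rintro v M' r' ⟨hM', hr'⟩
    unfold demand
    congr 1
    refine Finset.sum_congr rfl fun S _ => ?_
    have hset : (M' ∩ S).erase v = (M ∩ S).erase v := by
      ext m
      simp only [mem_erase, mem_inter]
      constructor
      · rintro ⟨hne, hm, hs⟩; exact ⟨hne, (hM' m hne).mp hm, hs⟩
      · rintro ⟨hne, hm, hs⟩; exact ⟨hne, (hM' m hne).mpr hm, hs⟩
    rw [hset]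
    exact Finset.sum_congr rfl fun m hm => hr' m S (Finset.ne_of_mem_erase hm)
  -- nobody is protected at the original profile
  have hprot : ∀ u, ¬(u ∈ M ∧ c u < demand d E M r u) := by
    rintro u ⟨_, h⟩
    exact absurd h (not_lt.mpr (hDle u))
  -- original utility equals -D v for every agent
  have hU : ∀ v, utility d E c T M r v = -demand d E M r v := by
    intro v
    unfold utility
    by_cases hv : v ∈ M
    · rw [if_pos hv]
      have hF : ∑ S ∈ E.filter (fun S => v ∈ S),
          (r v S / ((d : ℝ) - 1)) *
            ((((S.filter fun u => ¬(u ∈ M ∧ c u < demand d E M r u)).erase v).card : ℝ) +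
              ∑ u ∈ (S.filter fun u => u ∈ M ∧ c u < demand d E M r u).erase v,
                c u / demand d E M r u) = c v := by
        rw [← htight v hv]
        refine Finset.sum_congr rfl fun S hS => ?_
        rw [mem_filter] at hS
        have h1 : (S.filter fun u => ¬(u ∈ M ∧ c u < demand d E M r u)) = S :=
          Finset.filter_true_of_mem fun u _ => hprot u
        have h2 : (S.filter fun u => u ∈ M ∧ c u < demand d E M r u) = ∅ :=
          Finset.filter_false_of_mem fun u _ => hprot u
        rw [h1, h2]
        have hcd : ((S.erase v).card : ℝ) = (d:ℝ) - 1 := by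
          rw [Finset.card_erase_of_mem hS.2, hunif S hS.1]
          have hd1 : 1 ≤ d := le_trans (by norm_num) hd
          push_cast [hd1]; ring
        have hrv : r v S = y S := by simp [hrdef, hv, hS.1, hS.2]
        rw [hcd, hrv]
        simp only [Finset.erase_empty, Finset.sum_empty, add_zero]
        field_simp
      rw [hF, min_eq_left (hDle v)]
      ring
    · rw [if_neg hv]
      have hne : ¬ ∃ S ∈ E, v ∈ S ∧ M ∩ S = ∅ := by
        rintro ⟨S, hS, -, hMS⟩
        exact absurd hMS (hM S hS).ne_empty
      rw [if_neg hne]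
      ring
  refine ⟨hvalid, ?_⟩
  intro v M' r' hvalid' hdev
  rw [hU v]
  have hDv : demand d E M' r' v = demand d E M r v := hDdev v M' r' hdev
  unfold utility
  by_cases hv' : v ∈ M'
  · rw [if_pos hv']
    -- F⁺ bound
    have hF : ∑ S ∈ E.filter (fun S => v ∈ S),
        (r' v S / ((d : ℝ) - 1)) *
          ((((S.filter fun u => ¬(u ∈ M' ∧ c u < demand d E M' r' u)).erase v).card : ℝ) +
            ∑ u ∈ (S.filter fun u => u ∈ M' ∧ c u < demand d E M' r' u).erase v,
              c u / demand d E M' r' u) ≤ c v := by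
      rw [← hvalid'.2.2 v hv']
      refine Finset.sum_le_sum fun S hS => ?_
      rw [mem_filter] at hS
      set p : V → Prop := fun u => u ∈ M' ∧ c u < demand d E M' r' u with hp
      have hcards : ((S.filter fun u => ¬ p u).erase v).card
          + ((S.filter p).erase v).card = d - 1 := by
        have e1 : (S.filter fun u => ¬ p u).erase v = (S.erase v).filter fun u => ¬ p u := by
          ext u; simp only [mem_erase, mem_filter]; tauto
        have e2 : (S.filter p).erase v = (S.erase v).filter p := by
          ext u; simp only [mem_erase, mem_filter]; tauto
        rw [e1, e2, add_comm, Finset.card_filter_add_card_filter_not,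
          Finset.card_erase_of_mem hS.2, hunif S hS.1]
      have hsumle : ∑ u ∈ (S.filter p).erase v, c u / demand d E M' r' u
          ≤ (((S.filter p).erase v).card : ℝ) := by
        calc ∑ u ∈ (S.filter p).erase v, c u / demand d E M' r' u
            ≤ ∑ u ∈ (S.filter p).erase v, 1 := by
              refine Finset.sum_le_sum fun u hu => ?_
              rw [mem_erase, mem_filter] at hu
              have hcu : c u < demand d E M' r' u := hu.2.2.2
              have hpos : 0 < demand d E M' r' u := lt_of_le_of_lt (hc u) hcu
              exact le_of_lt ((div_lt_one hpos).mpr hcu)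
          _ = (((S.filter p).erase v).card : ℝ) := by simp
      have hcoef : (((S.filter fun u => ¬ p u).erase v).card : ℝ) +
          ∑ u ∈ (S.filter p).erase v, c u / demand d E M' r' u ≤ (d:ℝ) - 1 := by
        have hd1 : 1 ≤ d := le_trans (by norm_num) hd
        have hcast : ((((S.filter fun u => ¬ p u).erase v).card
            + ((S.filter p).erase v).card : ℕ) : ℝ) = ((d - 1 : ℕ) : ℝ) := by
          exact_mod_cast congrArg (Nat.cast : ℕ → ℝ) hcards
        rw [Nat.cast_add, Nat.cast_sub hd1] at hcast
        push_cast at hcast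
        linarith
      calc (r' v S / ((d : ℝ) - 1)) *
            ((((S.filter fun u => ¬ p u).erase v).card : ℝ) +
              ∑ u ∈ (S.filter p).erase v, c u / demand d E M' r' u)
          ≤ (r' v S / ((d : ℝ) - 1)) * ((d:ℝ) - 1) := by
            exact mul_le_mul_of_nonneg_left hcoef (div_nonneg (hvalid'.1 v S) hd0.le)
        _ = r' v S := by field_simp
    have hmin : min (demand d E M' r' v) (c v) = demand d E M r v := by
      rw [hDv, min_eq_left (hDle v)]
    linarith
  · rw [if_neg hv', hDv]
    have hTpos : 0 < T := by
      have : (0:ℝ) ≤ 2 * ∑ v, c v := by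
        have := Finset.sum_nonneg (fun v (_ : v ∈ Finset.univ) => hc v)
        linarith
      linarith
    split <;> linarith

end
end MafiaHS
end

section
/- For every finite d-uniform hypergraph (V, 𝓔) (d ≥ 2) with a nonnegative cost function c : V → ℝ, the Mafia Hitting Set Game has a pure Nash equilibrium; that is, there exists a strategy profile (M, r) such that no single agent can strictly increase his utility by unilaterally changing his own strategy. -/
open Finset
open scoped Classical

namespace MafiaHS

variable {V : Type*} [Fintype V] [DecidableEq V]

noncomputable section

set_option linter.unusedSectionVars false
set_option linter.unusedVariables false

/-- Discrete layer-cake comparison: if the weighted upper level sets of `g` are dominated by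
those of `h`, then the weighted sum of `g` is dominated by that of `h`. -/
lemma dominance_aux (wA wB : V → ℝ) (A B : Finset V)
    (hwA : ∀ a ∈ A, 0 ≤ wA a) (hwB : ∀ b ∈ B, 0 ≤ wB b) :
    ∀ n : ℕ, ∀ g h : V → ℝ, (∀ a ∈ A, 0 ≤ g a) → (∀ b ∈ B, 0 ≤ h b) →
    (∀ s : ℝ, 0 ≤ s →
      ∑ a ∈ A.filter (fun a => s < g a), wA a ≤ ∑ b ∈ B.filter (fun b => s < h b), wB b) →
    ((A.image g ∪ B.image h).filter (fun t => 0 < t)).card ≤ n →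
    ∑ a ∈ A, wA a * g a ≤ ∑ b ∈ B, wB b * h b := by
  intro n
  induction n with
  | zero =>
    intro g h hg hh _ hcard
    have hP : (A.image g ∪ B.image h).filter (fun t => 0 < t) = ∅ :=
      Finset.card_eq_zero.1 (Nat.le_zero.1 hcard)
    have hg0 : ∀ a ∈ A, g a = 0 := by
      intro a ha
      by_contra hne
      have h0 : 0 < g a := lt_of_le_of_ne (hg a ha) (Ne.symm hne)
      have : g a ∈ (A.image g ∪ B.image h).filter (fun t => 0 < t) :=
        Finset.mem_filter.2 ⟨Finset.mem_union_left _ (Finset.mem_image_of_mem g ha), h0⟩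
      simp [hP] at this
    calc ∑ a ∈ A, wA a * g a = 0 := by
          apply Finset.sum_eq_zero; intro a ha; rw [hg0 a ha, mul_zero]
      _ ≤ ∑ b ∈ B, wB b * h b :=
          Finset.sum_nonneg fun b hb => mul_nonneg (hwB b hb) (hh b hb)
  | succ n ih =>
    intro g h hg hh hdom hcard
    set P := (A.image g ∪ B.image h).filter (fun t => 0 < t) with hPdef
    by_cases hPe : P = ∅
    · have hg0 : ∀ a ∈ A, g a = 0 := by
        intro a ha
        by_contra hne
        have h0 : 0 < g a := lt_of_le_of_ne (hg a ha) (Ne.symm hne)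
        have : g a ∈ P :=
          Finset.mem_filter.2 ⟨Finset.mem_union_left _ (Finset.mem_image_of_mem g ha), h0⟩
        simp [hPe] at this
      calc ∑ a ∈ A, wA a * g a = 0 := by
            apply Finset.sum_eq_zero; intro a ha; rw [hg0 a ha, mul_zero]
        _ ≤ ∑ b ∈ B, wB b * h b :=
            Finset.sum_nonneg fun b hb => mul_nonneg (hwB b hb) (hh b hb)
    · have hPne : P.Nonempty := Finset.nonempty_of_ne_empty hPe
      set u := P.max' hPne with hudef
      have humem : u ∈ P := P.max'_mem hPne
      have hu0 : 0 < u := (Finset.mem_filter.1 humem).2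
      set Q := P.erase u with hQdef
      set s₂ : ℝ := if hQ : Q.Nonempty then Q.max' hQ else 0 with hs₂def
      have hs₂0 : 0 ≤ s₂ := by
        rw [hs₂def]
        split
        · rename_i hQ
          exact le_of_lt (Finset.mem_filter.1 (Finset.mem_of_mem_erase (Q.max'_mem hQ))).2
        · exact le_refl 0
      have hs₂u : s₂ < u := by
        rw [hs₂def]
        split
        · rename_i hQ
          have hmem := Q.max'_mem hQ
          exact lt_of_le_of_ne (P.le_max' _ (Finset.mem_of_mem_erase hmem))
            (Finset.ne_of_mem_erase hmem)
        · exact hu0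
      have hval : ∀ t : ℝ, t ∈ P → t ≠ u → t ≤ s₂ := by
        intro t ht htu
        have htQ : t ∈ Q := Finset.mem_erase.2 ⟨htu, ht⟩
        have hQne : Q.Nonempty := ⟨t, htQ⟩
        rw [hs₂def, dif_pos hQne]
        exact Q.le_max' _ htQ
      have key : ∀ t : ℝ, t ∈ A.image g ∪ B.image h → 0 ≤ t → t ≤ s₂ ∨ t = u := by
        intro t ht ht0
        rcases eq_or_lt_of_le ht0 with h0 | h0
        · exact Or.inl (h0 ▸ hs₂0)
        · have htP : t ∈ P := Finset.mem_filter.2 ⟨ht, h0⟩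
          by_cases htu : t = u
          · exact Or.inr htu
          · exact Or.inl (hval t htP htu)
      set g' : V → ℝ := fun a => min (g a) s₂ with hg'def
      set h' : V → ℝ := fun b => min (h b) s₂ with hh'def
      -- decompositions
      have decompA : ∑ a ∈ A, wA a * g a
          = (∑ a ∈ A, wA a * g' a) + (u - s₂) * ∑ a ∈ A.filter (fun a => s₂ < g a), wA a := by
        have step : ∀ a ∈ A, wA a * g a
            = wA a * g' a + (if s₂ < g a then wA a * (u - s₂) else 0) := by
          intro a ha
          rcases key (g a) (Finset.mem_union_left _ (Finset.mem_image_of_mem g ha)) (hg a ha)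
            with h1 | h1
          · rw [if_neg (not_lt.2 h1)]
            simp [hg'def, min_eq_left h1]
          · rw [if_pos (h1 ▸ hs₂u)]
            have : g' a = s₂ := by simp [hg'def, h1, min_eq_right (le_of_lt hs₂u)]
            rw [this, h1]; ring
        rw [Finset.sum_congr rfl step, Finset.sum_add_distrib]
        congr 1
        rw [← Finset.sum_filter, Finset.mul_sum]
        exact Finset.sum_congr rfl fun a _ => by ring
      have decompB : ∑ b ∈ B, wB b * h b
          = (∑ b ∈ B, wB b * h' b) + (u - s₂) * ∑ b ∈ B.filter (fun b => s₂ < h b), wB b := by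
        have step : ∀ b ∈ B, wB b * h b
            = wB b * h' b + (if s₂ < h b then wB b * (u - s₂) else 0) := by
          intro b hb
          rcases key (h b) (Finset.mem_union_right _ (Finset.mem_image_of_mem h hb)) (hh b hb)
            with h1 | h1
          · rw [if_neg (not_lt.2 h1)]
            simp [hh'def, min_eq_left h1]
          · rw [if_pos (h1 ▸ hs₂u)]
            have : h' b = s₂ := by simp [hh'def, h1, min_eq_right (le_of_lt hs₂u)]
            rw [this, h1]; ring
        rw [Finset.sum_congr rfl step, Finset.sum_add_distrib]
        congr 1
        rw [← Finset.sum_filter, Finset.mul_sum]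
        exact Finset.sum_congr rfl fun b _ => by ring
      -- induction hypothesis applies to g', h'
      have hg' : ∀ a ∈ A, 0 ≤ g' a := fun a ha => le_min (hg a ha) hs₂0
      have hh' : ∀ b ∈ B, 0 ≤ h' b := fun b hb => le_min (hh b hb) hs₂0
      have hdom' : ∀ s : ℝ, 0 ≤ s →
          ∑ a ∈ A.filter (fun a => s < g' a), wA a ≤ ∑ b ∈ B.filter (fun b => s < h' b), wB b := by
        intro s hs
        rcases le_or_gt s₂ s with hcase | hcase
        · have : A.filter (fun a => s < g' a) = ∅ := by
            apply Finset.filter_eq_empty_iff.2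
            intro a _
            exact not_lt.2 (le_trans (min_le_right _ _) hcase)
          rw [this]
          simp only [Finset.sum_empty]
          exact Finset.sum_nonneg fun b hb => hwB b (Finset.mem_filter.1 hb).1
        · have e1 : A.filter (fun a => s < g' a) = A.filter (fun a => s < g a) := by
            apply Finset.filter_congr
            intro a _
            simp [hg'def, lt_min_iff, hcase]
          have e2 : B.filter (fun b => s < h' b) = B.filter (fun b => s < h b) := by
            apply Finset.filter_congr
            intro b _
            simp [hh'def, lt_min_iff, hcase]
          rw [e1, e2]
          exact hdom s hs
      have hcard' : ((A.image g' ∪ B.image h').filter (fun t => 0 < t)).card ≤ n := by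
        have hQne' : ∀ t : ℝ, t ∈ (A.image g' ∪ B.image h').filter (fun t => 0 < t) → t ∈ Q := by
          intro t ht
          obtain ⟨htu, ht0⟩ := Finset.mem_filter.1 ht
          have hts₂ : t ≤ s₂ := by
            rcases Finset.mem_union.1 htu with h1 | h1
            · obtain ⟨a, _, rfl⟩ := Finset.mem_image.1 h1
              exact min_le_right _ _
            · obtain ⟨b, _, rfl⟩ := Finset.mem_image.1 h1
              exact min_le_right _ _
          have hQne : Q.Nonempty := by
            by_contra hQn
            rw [hs₂def, dif_neg hQn] at hts₂
            exact absurd (lt_of_lt_of_le ht0 hts₂) (lt_irrefl 0)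
          rcases eq_or_lt_of_le hts₂ with h1 | h1
          · rw [hs₂def, dif_pos hQne] at h1
            exact h1 ▸ Q.max'_mem hQne
          · -- t < s₂, so t = min (g a) s₂ = g a  (or h b), hence t ∈ P
            have htP : t ∈ P := by
              apply Finset.mem_filter.2
              refine ⟨?_, ht0⟩
              rcases Finset.mem_union.1 htu with h2 | h2
              · obtain ⟨a, ha, hta⟩ := Finset.mem_image.1 h2
                have : g' a = g a := by
                  by_contra hne
                  have : g' a = s₂ := by
                    rcases min_choice (g a) s₂ with hch | hch
                    · exact absurd hch hne
                    · exact hch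
                  rw [← hta, this] at h1
                  exact absurd h1 (lt_irrefl _)
                exact Finset.mem_union_left _
                  (Finset.mem_image.2 ⟨a, ha, by rw [← this, hta]⟩)
              · obtain ⟨b, hb, htb⟩ := Finset.mem_image.1 h2
                have : h' b = h b := by
                  by_contra hne
                  have : h' b = s₂ := by
                    rcases min_choice (h b) s₂ with hch | hch
                    · exact absurd hch hne
                    · exact hch
                  rw [← htb, this] at h1
                  exact absurd h1 (lt_irrefl _)
                exact Finset.mem_union_right _
                  (Finset.mem_image.2 ⟨b, hb, by rw [← this, htb]⟩)
            exact Finset.mem_erase.2 ⟨ne_of_lt (lt_of_lt_of_le h1 (le_of_lt hs₂u)) , htP⟩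
        have h1 : ((A.image g' ∪ B.image h').filter (fun t => 0 < t)).card ≤ Q.card :=
          Finset.card_le_card fun t ht => hQne' t ht
        have h2 : Q.card = P.card - 1 := Finset.card_erase_of_mem humem
        have h3 : P.card ≤ n + 1 := hcard
        omega
      have hIH := ih g' h' hg' hh' hdom' hcard'
      have htop : ∑ a ∈ A.filter (fun a => s₂ < g a), wA a
          ≤ ∑ b ∈ B.filter (fun b => s₂ < h b), wB b := hdom s₂ hs₂0
      have hfac : 0 ≤ u - s₂ := sub_nonneg.2 (le_of_lt hs₂u)
      rw [decompA, decompB]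
      have := mul_le_mul_of_nonneg_left htop hfac
      linarith


lemma swap_bound (d : ℕ) (hd : 2 ≤ d) (E : Finset (Finset V))
    (hunif : ∀ S ∈ E, S.card = d) (c : V → ℝ) (hc : ∀ v, 0 ≤ c v)
    (M : Finset V) (hhit : ∀ S ∈ E, (M ∩ S).Nonempty)
    (hmin : ∀ A : Finset V, (∀ S ∈ E, (A ∩ S).Nonempty) → ∑ m ∈ M, c m ≤ ∑ a ∈ A, c a)
    (y : V → ℝ) (hy : ∀ v, 0 ≤ y v) (φ : V → ℝ)
    (hφ : ∀ m ∈ M, ∀ S ∈ E, m ∈ S → φ m ≤ ∑ u ∈ S.erase m, y u)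
    (s : ℝ) (hs : 0 ≤ s) :
    ∑ m ∈ M.filter (fun m => s * ((d : ℝ) - 1) < φ m), c m
      ≤ ∑ v ∈ univ.filter (fun v => s < y v), c v := by
  set F := M.filter (fun m => s * ((d : ℝ) - 1) < φ m) with hF
  set Y := univ.filter (fun v => s < y v) with hY
  have hFM : F ⊆ M := Finset.filter_subset _ _
  have hhitA : ∀ S ∈ E, (((M \ F) ∪ Y) ∩ S).Nonempty := by
    intro S hS
    obtain ⟨m, hm⟩ := hhit S hS
    obtain ⟨hmM, hmS⟩ := Finset.mem_inter.1 hm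
    by_cases hmF : m ∈ F
    · -- every club through m contains a vertex of Y other than m
      have hφm : s * ((d : ℝ) - 1) < φ m := (Finset.mem_filter.1 hmF).2
      have hle : φ m ≤ ∑ u ∈ S.erase m, y u := hφ m hmM S hS hmS
      have hcard : ((S.erase m).card : ℝ) = (d : ℝ) - 1 := by
        rw [Finset.card_erase_of_mem hmS, hunif S hS]
        have : (1 : ℕ) ≤ d := le_trans one_le_two hd
        push_cast [Nat.cast_sub this]
        ring
      have : ∃ u ∈ S.erase m, s < y u := by
        by_contra hcon
        push_neg at hcon
        have : ∑ u ∈ S.erase m, y u ≤ ∑ _u ∈ S.erase m, s :=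
          Finset.sum_le_sum fun u hu => hcon u hu
        rw [Finset.sum_const, nsmul_eq_mul] at this
        rw [hcard] at this
        nlinarith
      obtain ⟨u, huS, huy⟩ := this
      exact ⟨u, Finset.mem_inter.2 ⟨Finset.mem_union_right _
        (Finset.mem_filter.2 ⟨Finset.mem_univ u, huy⟩), Finset.mem_of_mem_erase huS⟩⟩
    · exact ⟨m, Finset.mem_inter.2 ⟨Finset.mem_union_left _
        (Finset.mem_sdiff.2 ⟨hmM, hmF⟩), hmS⟩⟩
  have h1 : ∑ m ∈ M, c m ≤ ∑ a ∈ (M \ F) ∪ Y, c a := hmin _ hhitA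
  have h2 : ∑ a ∈ (M \ F) ∪ Y, c a ≤ ∑ a ∈ M \ F, c a + ∑ a ∈ Y, c a := by
    have := Finset.sum_union_inter (s₁ := M \ F) (s₂ := Y) (f := c)
    have hnn : 0 ≤ ∑ a ∈ (M \ F) ∩ Y, c a := Finset.sum_nonneg fun a _ => hc a
    linarith
  have h3 : ∑ a ∈ M \ F, c a = ∑ m ∈ M, c m - ∑ m ∈ F, c m :=
    Finset.sum_sdiff_eq_sub hFM
  linarith


/-- Swapping a double sum over incidences between clubs and vertices. -/
lemma sum_incidence (E : Finset (Finset V)) (A : Finset V) (F : V → Finset V → ℝ) :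
    ∑ v ∈ A, ∑ S ∈ E.filter (fun S => v ∈ S), F v S
      = ∑ S ∈ E, ∑ v ∈ A ∩ S, F v S := by
  simp only [Finset.sum_filter]
  rw [Finset.sum_comm]
  apply Finset.sum_congr rfl
  intro S _
  rw [← Finset.sum_filter, Finset.filter_mem_eq_inter]

/-- Exchanging the roles of payer and receiver inside a club. -/
lemma sum_club_exchange (S : Finset V) (M : Finset V) (G : V → V → ℝ) :
    ∑ v ∈ S, ∑ m ∈ (M ∩ S).erase v, G v m
      = ∑ m ∈ M ∩ S, ∑ v ∈ S.erase m, G v m := by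
  have h1 : ∀ v ∈ S, ∑ m ∈ (M ∩ S).erase v, G v m
      = ∑ m ∈ M ∩ S, if m ≠ v then G v m else 0 := by
    intro v _
    rw [← Finset.sum_filter]
    apply Finset.sum_congr
    · ext m
      simp [Finset.mem_erase, Finset.mem_filter, and_comm]
    · intros; rfl
  have h2 : ∀ m ∈ M ∩ S, ∑ v ∈ S.erase m, G v m
      = ∑ v ∈ S, if m ≠ v then G v m else 0 := by
    intro m _
    rw [← Finset.sum_filter]
    apply Finset.sum_congr
    · ext v
      simp [Finset.mem_erase, Finset.mem_filter, and_comm, ne_comm]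
    · intros; rfl
  rw [Finset.sum_congr rfl h1, Finset.sum_congr rfl h2, Finset.sum_comm]

/-- The `y`-weighted total demand as a sum over mafiosi's payments. -/
lemma weighted_demand_sum (d : ℕ) (E : Finset (Finset V)) (M : Finset V)
    (r : V → Finset V → ℝ) (y : V → ℝ) :
    ∑ v, demand d E M r v * y v
      = (1 / ((d : ℝ) - 1)) *
          ∑ m ∈ M, ∑ S ∈ E.filter (fun S => m ∈ S), r m S * ∑ u ∈ S.erase m, y u := by
  simp only [demand]
  have hlhs : ∑ v, (1 / ((d:ℝ) - 1) * ∑ S ∈ E.filter (fun S => v ∈ S), ∑ m ∈ (M ∩ S).erase v, r m S) * y v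
      = (1 / ((d:ℝ) - 1)) * ∑ v, (∑ S ∈ E.filter (fun S => v ∈ S), ∑ m ∈ (M ∩ S).erase v, r m S) * y v := by
    rw [Finset.mul_sum]
    exact Finset.sum_congr rfl fun v _ => by ring
  rw [hlhs]
  congr 1
  have h0 : ∀ v : V, (∑ S ∈ E.filter (fun S => v ∈ S), ∑ m ∈ (M ∩ S).erase v, r m S) * y v
      = ∑ S ∈ E.filter (fun S => v ∈ S), ∑ m ∈ (M ∩ S).erase v, r m S * y v := by
    intro v
    rw [Finset.sum_mul]
    exact Finset.sum_congr rfl fun S _ => by rw [Finset.sum_mul]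
  rw [Finset.sum_congr rfl fun v _ => h0 v]
  rw [sum_incidence E Finset.univ (fun v S => ∑ m ∈ (M ∩ S).erase v, r m S * y v)]
  rw [sum_incidence E M (fun m S => r m S * ∑ u ∈ S.erase m, y u)]
  apply Finset.sum_congr rfl
  intro S _
  rw [Finset.univ_inter]
  have := sum_club_exchange S M (fun v m => r m S * y v)
  -- our sum is over v ∈ S of sum over m of r m S * y v
  calc ∑ v ∈ S, ∑ m ∈ (M ∩ S).erase v, r m S * y v
      = ∑ m ∈ M ∩ S, ∑ v ∈ S.erase m, r m S * y v := this
    _ = ∑ m ∈ M ∩ S, r m S * ∑ u ∈ S.erase m, y u := by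
        exact Finset.sum_congr rfl fun m _ => by rw [Finset.mul_sum]


/-- A vertex's own demand does not change when he unilaterally deviates. -/
lemma demand_own_invariant (d : ℕ) (E : Finset (Finset V)) (v : V)
    (M M' : Finset V) (r r' : V → Finset V → ℝ)
    (hdev : Deviation v M M' r r') :
    demand d E M' r' v = demand d E M r v := by
  unfold demand
  congr 1
  apply Finset.sum_congr rfl
  intro S _
  have hset : (M' ∩ S).erase v = (M ∩ S).erase v := by
    ext u
    simp only [Finset.mem_erase, Finset.mem_inter]
    constructor
    · rintro ⟨huv, huM, huS⟩
      exact ⟨huv, (hdev.1 u huv).1 huM, huS⟩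
    · rintro ⟨huv, huM, huS⟩
      exact ⟨huv, (hdev.1 u huv).2 huM, huS⟩
  rw [hset]
  apply Finset.sum_congr rfl
  intro m hm
  exact hdev.2 m S (Finset.mem_erase.1 hm).1

lemma demand_nonneg (d : ℕ) (hd : 2 ≤ d) (E : Finset (Finset V)) (M : Finset V)
    (r : V → Finset V → ℝ) (hr : ∀ m S, 0 ≤ r m S) (v : V) :
    0 ≤ demand d E M r v := by
  unfold demand
  have hd1 : (0 : ℝ) < (d : ℝ) - 1 := by
    have : (2 : ℝ) ≤ (d : ℝ) := by exact_mod_cast hd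
    linarith
  apply mul_nonneg (le_of_lt (by positivity))
  exact Finset.sum_nonneg fun S _ => Finset.sum_nonneg fun m _ => hr m S

/-- The bracket in `F⁺` is at most `d - 1`. -/
lemma bracket_le (d : ℕ) (hd : 2 ≤ d) (E : Finset (Finset V))
    (hunif : ∀ S ∈ E, S.card = d) (c : V → ℝ) (hc : ∀ v, 0 ≤ c v)
    (M' : Finset V) (r' : V → Finset V → ℝ)
    (S : Finset V) (hS : S ∈ E) (v : V) (hv : v ∈ S) :
    (((S.filter fun u => ¬(u ∈ M' ∧ c u < demand d E M' r' u)).erase v).card : ℝ) +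
      ∑ u ∈ (S.filter fun u => u ∈ M' ∧ c u < demand d E M' r' u).erase v,
        c u / demand d E M' r' u ≤ (d : ℝ) - 1 := by
  set p : V → Prop := fun u => u ∈ M' ∧ c u < demand d E M' r' u with hp
  set A := (S.filter fun u => p u).erase v with hA
  set B := (S.filter fun u => ¬ p u).erase v with hB
  have hsum : ∑ u ∈ A, c u / demand d E M' r' u ≤ (A.card : ℝ) := by
    have : ∀ u ∈ A, c u / demand d E M' r' u ≤ 1 := by
      intro u hu
      have hu' : p u := (Finset.mem_filter.1 (Finset.mem_of_mem_erase hu)).2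
      have hpos : 0 < demand d E M' r' u := lt_of_le_of_lt (hc u) hu'.2
      exact (div_le_one hpos).2 (le_of_lt hu'.2)
    calc ∑ u ∈ A, c u / demand d E M' r' u ≤ ∑ _u ∈ A, (1 : ℝ) :=
          Finset.sum_le_sum this
      _ = (A.card : ℝ) := by rw [Finset.sum_const, nsmul_eq_mul, mul_one]
  have hcards : (B.card : ℝ) + (A.card : ℝ) = (d : ℝ) - 1 := by
    have hdisj : Disjoint A B := by
      apply Finset.disjoint_left.2
      intro u huA huB
      exact (Finset.mem_filter.1 (Finset.mem_of_mem_erase huB)).2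
        (Finset.mem_filter.1 (Finset.mem_of_mem_erase huA)).2
    have hunion : A ∪ B = S.erase v := by
      ext u
      simp only [hA, hB, Finset.mem_union, Finset.mem_erase, Finset.mem_filter]
      constructor
      · rintro (⟨huv, huS, _⟩ | ⟨huv, huS, _⟩) <;> exact ⟨huv, huS⟩
      · rintro ⟨huv, huS⟩
        by_cases hpu : p u
        · exact Or.inl ⟨huv, huS, hpu⟩
        · exact Or.inr ⟨huv, huS, hpu⟩
    have hcard : A.card + B.card = d - 1 := by
      rw [← Finset.card_union_of_disjoint hdisj, hunion,
        Finset.card_erase_of_mem hv, hunif S hS]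
    have hd1 : 1 ≤ d := le_trans one_le_two hd
    have hcast : ((A.card + B.card : ℕ) : ℝ) = ((d - 1 : ℕ) : ℝ) := by rw [hcard]
    push_cast [Nat.cast_sub hd1] at hcast
    linarith
  linarith

/-- In a valid profile `(M', r')`, a mafioso's utility is at most `-min(D v, c v)`. -/
lemma mafioso_utility_le (d : ℕ) (hd : 2 ≤ d) (E : Finset (Finset V))
    (hunif : ∀ S ∈ E, S.card = d) (c : V → ℝ) (hc : ∀ v, 0 ≤ c v) (T : ℝ)
    (M' : Finset V) (r' : V → Finset V → ℝ) (hvalid : ValidProfile E c M' r')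
    (v : V) (hv : v ∈ M') :
    utility d E c T M' r' v ≤ -min (demand d E M' r' v) (c v) := by
  have hd1 : (0 : ℝ) < (d : ℝ) - 1 := by
    have : (2 : ℝ) ≤ (d : ℝ) := by exact_mod_cast hd
    linarith
  have hF : (∑ S ∈ E.filter (fun S => v ∈ S),
      (r' v S / ((d : ℝ) - 1)) *
        ((((S.filter fun u => ¬(u ∈ M' ∧ c u < demand d E M' r' u)).erase v).card : ℝ) +
          ∑ u ∈ (S.filter fun u => u ∈ M' ∧ c u < demand d E M' r' u).erase v,
            c u / demand d E M' r' u)) ≤ c v := by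
    calc (∑ S ∈ E.filter (fun S => v ∈ S),
        (r' v S / ((d : ℝ) - 1)) *
          ((((S.filter fun u => ¬(u ∈ M' ∧ c u < demand d E M' r' u)).erase v).card : ℝ) +
            ∑ u ∈ (S.filter fun u => u ∈ M' ∧ c u < demand d E M' r' u).erase v,
              c u / demand d E M' r' u))
        ≤ ∑ S ∈ E.filter (fun S => v ∈ S), r' v S := by
          apply Finset.sum_le_sum
          intro S hS
          obtain ⟨hSE, hvS⟩ := Finset.mem_filter.1 hS
          have hbr := bracket_le d hd E hunif c hc M' r' S hSE v hvS
          have hnn : 0 ≤ r' v S / ((d : ℝ) - 1) := div_nonneg (hvalid.1 v S) (le_of_lt hd1)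
          calc (r' v S / ((d : ℝ) - 1)) * _ ≤ (r' v S / ((d : ℝ) - 1)) * ((d : ℝ) - 1) :=
                mul_le_mul_of_nonneg_left hbr hnn
            _ = r' v S := div_mul_cancel₀ _ (ne_of_gt hd1)
      _ = c v := hvalid.2.2 v hv
  rw [utility, if_pos hv]
  linarith

/-- Main lemma: a valid profile on a hitting set with demands below costs is a Nash
equilibrium. -/
lemma nash_of_good (d : ℕ) (hd : 2 ≤ d) (E : Finset (Finset V))
    (hunif : ∀ S ∈ E, S.card = d) (c : V → ℝ) (hc : ∀ v, 0 ≤ c v) (T : ℝ)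
    (hT : 2 * ∑ v, c v < T)
    (M : Finset V) (r : V → Finset V → ℝ)
    (hhit : ∀ S ∈ E, (M ∩ S).Nonempty)
    (hvalid : ValidProfile E c M r)
    (hfeas : ∀ v, demand d E M r v ≤ c v) :
    IsNashEq d E c T M r := by
  have hd1 : (0 : ℝ) < (d : ℝ) - 1 := by
    have : (2 : ℝ) ≤ (d : ℝ) := by exact_mod_cast hd
    linarith
  have hT0 : 0 ≤ T := by
    have : 0 ≤ ∑ v, c v := Finset.sum_nonneg fun v _ => hc v
    linarith
  -- current utility equals -D v for everyone
  have hcur : ∀ v, utility d E c T M r v = -demand d E M r v := by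
    intro v
    by_cases hv : v ∈ M
    · rw [utility, if_pos hv]
      have hnoprot : ∀ u, ¬(u ∈ M ∧ c u < demand d E M r u) := by
        rintro u ⟨_, hlt⟩
        exact absurd hlt (not_lt.2 (hfeas u))
      have hF : (∑ S ∈ E.filter (fun S => v ∈ S),
          (r v S / ((d : ℝ) - 1)) *
            ((((S.filter fun u => ¬(u ∈ M ∧ c u < demand d E M r u)).erase v).card : ℝ) +
              ∑ u ∈ (S.filter fun u => u ∈ M ∧ c u < demand d E M r u).erase v,
                c u / demand d E M r u)) = c v := by
        have hterm : ∀ S ∈ E.filter (fun S => v ∈ S),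
            (r v S / ((d : ℝ) - 1)) *
              ((((S.filter fun u => ¬(u ∈ M ∧ c u < demand d E M r u)).erase v).card : ℝ) +
                ∑ u ∈ (S.filter fun u => u ∈ M ∧ c u < demand d E M r u).erase v,
                  c u / demand d E M r u) = r v S := by
          intro S hS
          obtain ⟨hSE, hvS⟩ := Finset.mem_filter.1 hS
          have h1 : (S.filter fun u => u ∈ M ∧ c u < demand d E M r u) = ∅ :=
            Finset.filter_false_of_mem fun u _ => hnoprot u
          have h2 : (S.filter fun u => ¬(u ∈ M ∧ c u < demand d E M r u)) = S :=
            Finset.filter_true_of_mem fun u _ => hnoprot u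
          rw [h1, h2]
          have hcard : (((S.erase v).card : ℕ) : ℝ) = (d : ℝ) - 1 := by
            rw [Finset.card_erase_of_mem hvS, hunif S hSE]
            have hd1' : 1 ≤ d := le_trans one_le_two hd
            push_cast [Nat.cast_sub hd1']
            ring
          simp only [Finset.erase_empty, Finset.sum_empty, add_zero]
          rw [hcard, div_mul_cancel₀ _ (ne_of_gt hd1)]
        rw [Finset.sum_congr rfl hterm]
        exact hvalid.2.2 v hv
      rw [hF, min_eq_left (hfeas v)]
      ring
    · rw [utility, if_neg hv]
      have : ¬ ∃ S ∈ E, v ∈ S ∧ M ∩ S = ∅ := by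
        rintro ⟨S, hSE, _, hMS⟩
        exact (Finset.Nonempty.ne_empty (hhit S hSE)) hMS
      rw [if_neg this]
      ring
  constructor
  · exact hvalid
  · intro v M' r' hvalid' hdev
    rw [hcur v]
    have hDinv := demand_own_invariant d E v M M' r r' hdev
    by_cases hv' : v ∈ M'
    · have := mafioso_utility_le d hd E hunif c hc T M' r' hvalid' v hv'
      rw [hDinv, min_eq_left (hfeas v)] at this
      exact this
    · rw [utility, if_neg hv', hDinv]
      have hpen : 0 ≤ (if ∃ S ∈ E, v ∈ S ∧ M' ∩ S = ∅ then T else 0) := by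
        split
        · exact hT0
        · exact le_refl 0
      linarith


/-- There is a hitting set `M` with a valid ransom whose demands stay below the costs. -/
lemma exists_good_profile (d : ℕ) (hd : 2 ≤ d) (E : Finset (Finset V))
    (hunif : ∀ S ∈ E, S.card = d) (c : V → ℝ) (hc : ∀ v, 0 ≤ c v) :
    ∃ (M : Finset V) (r : V → Finset V → ℝ),
      (∀ S ∈ E, (M ∩ S).Nonempty) ∧ ValidProfile E c M r ∧ ∀ v, demand d E M r v ≤ c v := by
  have hd1 : (0 : ℝ) < (d : ℝ) - 1 := by
    have : (2 : ℝ) ≤ (d : ℝ) := by exact_mod_cast hd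
    linarith
  -- a minimum-cost hitting set, kept inside the union of clubs
  have huniv : (Finset.univ : Finset V) ∈
      (Finset.univ : Finset V).powerset.filter (fun A => ∀ S ∈ E, (A ∩ S).Nonempty) := by
    apply Finset.mem_filter.2
    refine ⟨Finset.mem_powerset_self _, fun S hS => ?_⟩
    rw [Finset.univ_inter]
    rw [← Finset.card_pos, hunif S hS]
    omega
  obtain ⟨M₀, hM₀mem, hM₀min⟩ := Finset.exists_min_image
    ((Finset.univ : Finset V).powerset.filter (fun A => ∀ S ∈ E, (A ∩ S).Nonempty))
    (fun A => ∑ m ∈ A, c m) ⟨_, huniv⟩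
  have hM₀hit : ∀ S ∈ E, (M₀ ∩ S).Nonempty := (Finset.mem_filter.1 hM₀mem).2
  set M : Finset V := M₀.filter (fun m => ∃ S ∈ E, m ∈ S) with hMdef
  have hhit : ∀ S ∈ E, (M ∩ S).Nonempty := by
    intro S hS
    obtain ⟨m, hm⟩ := hM₀hit S hS
    obtain ⟨hmM₀, hmS⟩ := Finset.mem_inter.1 hm
    exact ⟨m, Finset.mem_inter.2 ⟨Finset.mem_filter.2 ⟨hmM₀, ⟨S, hS, hmS⟩⟩, hmS⟩⟩
  have hmemclub : ∀ m ∈ M, (E.filter (fun S => m ∈ S)).Nonempty := by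
    intro m hm
    obtain ⟨S, hS, hmS⟩ := (Finset.mem_filter.1 hm).2
    exact ⟨S, Finset.mem_filter.2 ⟨hS, hmS⟩⟩
  have hmin : ∀ A : Finset V, (∀ S ∈ E, (A ∩ S).Nonempty) → ∑ m ∈ M, c m ≤ ∑ a ∈ A, c a := by
    intro A hA
    calc ∑ m ∈ M, c m ≤ ∑ m ∈ M₀, c m :=
          Finset.sum_le_sum_of_subset_of_nonneg (Finset.filter_subset _ _)
            (fun m _ _ => hc m)
      _ ≤ ∑ a ∈ A, c a := hM₀min A
            (Finset.mem_filter.2 ⟨Finset.mem_powerset.2 (Finset.subset_univ A), hA⟩)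
  refine ⟨M, ?_⟩
  by_contra hcon
  push_neg at hcon
  -- club-choice machinery
  set pick : V → Finset V := fun m =>
    if hm : (E.filter (fun S => m ∈ S)).Nonempty then hm.choose else ∅ with hpickdef
  have hpick : ∀ m ∈ M, pick m ∈ E ∧ m ∈ pick m := by
    intro m hm
    have hne := hmemclub m hm
    rw [hpickdef]
    simp only [dif_pos hne]
    exact ⟨(Finset.mem_filter.1 hne.choose_spec).1, (Finset.mem_filter.1 hne.choose_spec).2⟩
  set fix : V → Finset V → Finset V := fun m S => if S ∈ E ∧ m ∈ S then S else pick m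
    with hfixdef
  have hfix : ∀ m ∈ M, ∀ S₀, fix m S₀ ∈ E ∧ m ∈ fix m S₀ := by
    intro m hm S₀
    rw [hfixdef]
    dsimp only
    split
    · rename_i hcase; exact hcase
    · exact hpick m hm
  set rOf : (V → Finset V) → (V → Finset V → ℝ) :=
    fun σ m S => if m ∈ M ∧ S = fix m (σ m) then c m else 0 with hrOfdef
  have hrOf : ∀ σ, ValidProfile E c M (rOf σ) := by
    intro σ
    refine ⟨fun m S => ?_, fun m S h => ?_, fun m hm => ?_⟩
    · rw [hrOfdef]; dsimp only; split
      · exact hc m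
      · exact le_refl 0
    · rw [hrOfdef]; dsimp only
      rw [if_neg]
      rintro ⟨hmM, rfl⟩
      obtain ⟨hE, hmS⟩ := hfix m hmM (σ m)
      rcases h with h | h | h
      · exact h hmM
      · exact h hmS
      · exact h hE
    · have hstep : ∀ S ∈ E.filter (fun S => m ∈ S),
          rOf σ m S = if S = fix m (σ m) then c m else 0 := by
        intro S _
        rw [hrOfdef]; dsimp only
        by_cases hS : S = fix m (σ m)
        · rw [if_pos ⟨hm, hS⟩, if_pos hS]
        · rw [if_neg (fun hcon' => hS hcon'.2), if_neg hS]
      rw [Finset.sum_congr rfl hstep, Finset.sum_ite_eq' (E.filter (fun S => m ∈ S))]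
      rw [if_pos (Finset.mem_filter.2 ⟨(hfix m hm (σ m)).1, (hfix m hm (σ m)).2⟩)]
  -- the linear demand map
  set Dmap : (V → Finset V → ℝ) →ₗ[ℝ] (V → ℝ) :=
    { toFun := fun r v => demand d E M r v
      map_add' := by
        intro r₁ r₂
        funext v
        simp only [demand, Pi.add_apply]
        rw [← mul_add, ← Finset.sum_add_distrib]
        congr 1
        apply Finset.sum_congr rfl
        intro S _
        rw [← Finset.sum_add_distrib]
      map_smul' := by
        intro a r
        funext v
        simp only [demand, Pi.smul_apply, smul_eq_mul, RingHom.id_apply]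
        have h1 : ∀ S ∈ E.filter (fun S => v ∈ S),
            ∑ m ∈ (M ∩ S).erase v, a * r m S = a * ∑ m ∈ (M ∩ S).erase v, r m S :=
          fun S _ => (Finset.mul_sum _ _ _).symm
        rw [Finset.sum_congr rfl h1, ← Finset.mul_sum]
        ring } with hDmapdef
  have hDapp : ∀ r v, Dmap r v = demand d E M r v := fun r v => rfl
  -- separation
  set K : Set (V → Finset V → ℝ) := {r | ValidProfile E c M r} with hKdef
  have hKconv : Convex ℝ K := by
    intro r₁ h₁ r₂ h₂ a b ha hb hab
    refine ⟨fun m S => ?_, fun m S h => ?_, fun m hm => ?_⟩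
    · simp only [Pi.add_apply, Pi.smul_apply, smul_eq_mul]
      exact add_nonneg (mul_nonneg ha (h₁.1 m S)) (mul_nonneg hb (h₂.1 m S))
    · simp only [Pi.add_apply, Pi.smul_apply, smul_eq_mul]
      rw [h₁.2.1 m S h, h₂.2.1 m S h, mul_zero, mul_zero, add_zero]
    · simp only [Pi.add_apply, Pi.smul_apply, smul_eq_mul]
      rw [Finset.sum_add_distrib, ← Finset.mul_sum, ← Finset.mul_sum,
        h₁.2.2 m hm, h₂.2.2 m hm, ← add_mul, hab, one_mul]
  set Rset : Set (V → ℝ) :=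
    convexHull ℝ (Set.range (fun σ : V → Finset V => Dmap (rOf σ))) with hRdef
  have hRcomp : IsCompact Rset := (Set.finite_range _).isCompact_convexHull (𝕜 := ℝ)
  have hRconv : Convex ℝ Rset := convex_convexHull ℝ _
  have hRsub : Rset ⊆ Dmap '' K := by
    apply convexHull_min
    · rintro x ⟨σ, rfl⟩
      exact ⟨rOf σ, hrOf σ, rfl⟩
    · exact hKconv.linear_image Dmap
  set Cset : Set (V → ℝ) := {x | ∀ v, x v ≤ c v} with hCdef
  have hCclosed : IsClosed Cset := by
    have : Cset = ⋂ v, {x : V → ℝ | x v ≤ c v} := by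
      ext x; simp [hCdef, Set.mem_iInter]
    rw [this]
    exact isClosed_iInter fun v => isClosed_le (continuous_apply v) continuous_const
  have hCconv : Convex ℝ Cset := by
    intro x hx y hy a b ha hb hab
    intro v
    simp only [Pi.add_apply, Pi.smul_apply, smul_eq_mul]
    have h1 := mul_le_mul_of_nonneg_left (hx v) ha
    have h2 := mul_le_mul_of_nonneg_left (hy v) hb
    have h3 : a * c v + b * c v = c v := by rw [← add_mul, hab, one_mul]
    linarith
  have hdisj : Disjoint Rset Cset := by
    rw [Set.disjoint_left]
    intro x hxR hxC
    obtain ⟨r, hrK, rfl⟩ := hRsub hxR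
    obtain ⟨v, hv⟩ := hcon r hhit hrK
    exact absurd (hxC v) (not_le.2 hv)
  obtain ⟨f, u, w, hfu, huw, hwf⟩ :=
    geometric_hahn_banach_compact_closed hRconv hRcomp hCconv hCclosed hdisj
  -- dual vector y
  set e : V → (V → ℝ) := fun v j => if v = j then 1 else 0 with hedef
  set y : V → ℝ := fun v => -(f (e v)) with hydef
  have hrep : ∀ x : V → ℝ, f x = -∑ v, x v * y v := by
    intro x
    conv_lhs => rw [pi_eq_sum_univ x]
    rw [map_sum]
    have h1 : ∀ v ∈ Finset.univ, f (x v • e v) = -(x v * y v) := by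
      intro v _
      rw [map_smul, smul_eq_mul, hydef]
      ring
    rw [Finset.sum_congr rfl h1, Finset.sum_neg_distrib]
  have hcC : c ∈ Cset := fun v => le_refl _
  have hy0 : ∀ v, 0 ≤ y v := by
    intro v
    by_contra hneg
    push_neg at hneg
    have hfe0 : 0 < f (e v) := by
      rw [hydef] at hneg
      simp only at hneg
      linarith
    set t := max ((f c - w) / f (e v)) 0 with htdef
    have ht0 : 0 ≤ t := le_max_right _ _
    have hmem : (c - t • e v) ∈ Cset := by
      intro j
      simp only [Pi.sub_apply, Pi.smul_apply, smul_eq_mul, hedef]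
      by_cases hvj : v = j
      · rw [if_pos hvj, mul_one]; linarith
      · rw [if_neg hvj, mul_zero]; linarith
    have hsep := hwf _ hmem
    rw [map_sub, map_smul, smul_eq_mul] at hsep
    have h2 : f c - w ≤ t * f (e v) := by
      have hle : (f c - w) / f (e v) ≤ t := le_max_left _ _
      have := mul_le_mul_of_nonneg_right hle (le_of_lt hfe0)
      rwa [div_mul_cancel₀ _ (ne_of_gt hfe0)] at this
    linarith
  -- the argmin club assignment
  have hSm' : ∀ m, m ∈ M → ∃ S, (S ∈ E ∧ m ∈ S) ∧
      ∀ S' ∈ E, m ∈ S' → ∑ u ∈ S.erase m, y u ≤ ∑ u ∈ S'.erase m, y u := by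
    intro m hm
    obtain ⟨S, hSmem, hSmin⟩ := Finset.exists_min_image (E.filter (fun S => m ∈ S))
      (fun S => ∑ u ∈ S.erase m, y u) (hmemclub m hm)
    refine ⟨S, ⟨(Finset.mem_filter.1 hSmem).1, (Finset.mem_filter.1 hSmem).2⟩, ?_⟩
    intro S' hS' hmS'
    exact hSmin S' (Finset.mem_filter.2 ⟨hS', hmS'⟩)
  set Sm : V → Finset V := fun m => if hm : m ∈ M then (hSm' m hm).choose else ∅ with hSmdef
  have hSmE : ∀ m ∈ M, Sm m ∈ E ∧ m ∈ Sm m := by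
    intro m hm
    rw [hSmdef]; simp only [dif_pos hm]
    exact (hSm' m hm).choose_spec.1
  have hSmmin : ∀ m ∈ M, ∀ S' ∈ E, m ∈ S' →
      ∑ u ∈ (Sm m).erase m, y u ≤ ∑ u ∈ S'.erase m, y u := by
    intro m hm
    rw [hSmdef]; simp only [dif_pos hm]
    exact (hSm' m hm).choose_spec.2
  set φ : V → ℝ := fun m => ∑ u ∈ (Sm m).erase m, y u with hφdef
  -- the strict separation inequality at the vertex rOf Sm
  have hstrict : ∑ v, c v * y v < ∑ v, demand d E M (rOf Sm) v * y v := by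
    have h1 : Dmap (rOf Sm) ∈ Rset := subset_convexHull _ _ ⟨Sm, rfl⟩
    have h2 : f (Dmap (rOf Sm)) < f c := lt_trans (lt_trans (hfu _ h1) huw) (hwf _ hcC)
    rw [hrep, hrep] at h2
    have h3 : ∑ v, c v * y v < ∑ v, (Dmap (rOf Sm)) v * y v := by linarith
    calc ∑ v, c v * y v < ∑ v, (Dmap (rOf Sm)) v * y v := h3
      _ = ∑ v, demand d E M (rOf Sm) v * y v := by
          apply Finset.sum_congr rfl
          intro v _
          rw [hDapp]
  -- evaluate the weighted demand of rOf Sm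
  have hval : ∑ v, demand d E M (rOf Sm) v * y v
      = (1 / ((d : ℝ) - 1)) * ∑ m ∈ M, c m * φ m := by
    rw [weighted_demand_sum d E M (rOf Sm) y]
    congr 1
    apply Finset.sum_congr rfl
    intro m hm
    have hfixeq : fix m (Sm m) = Sm m := by
      rw [hfixdef]; dsimp only
      rw [if_pos ⟨(hSmE m hm).1, (hSmE m hm).2⟩]
    have hstep : ∀ S ∈ E.filter (fun S => m ∈ S),
        rOf Sm m S * (∑ u ∈ S.erase m, y u)
          = if S = Sm m then c m * (∑ u ∈ S.erase m, y u) else 0 := by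
      intro S _
      rw [hrOfdef]; dsimp only
      rw [hfixeq]
      by_cases hS : S = Sm m
      · rw [if_pos ⟨hm, hS⟩, if_pos hS]
      · rw [if_neg (fun hcon' => hS hcon'.2), if_neg hS, zero_mul]
    rw [Finset.sum_congr rfl hstep, Finset.sum_ite_eq' (E.filter (fun S => m ∈ S))]
    rw [if_pos (Finset.mem_filter.2 ⟨(hSmE m hm).1, (hSmE m hm).2⟩)]
  -- the combinatorial bound via the layer-cake comparison
  have hφnonneg : ∀ m ∈ M, 0 ≤ φ m := by
    intro m _
    exact Finset.sum_nonneg fun u _ => hy0 u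
  have hφle : ∀ m ∈ M, ∀ S ∈ E, m ∈ S → φ m ≤ ∑ u ∈ S.erase m, y u := by
    intro m hm S hS hmS
    exact hSmmin m hm S hS hmS
  have hdomfinal : ∑ m ∈ M, c m * (φ m / ((d : ℝ) - 1)) ≤ ∑ v, c v * y v := by
    apply dominance_aux c c M Finset.univ (fun a _ => hc a) (fun b _ => hc b)
      (((M.image (fun m => φ m / ((d : ℝ) - 1)) ∪ Finset.univ.image y).filter
        (fun t => 0 < t)).card)
      (fun m => φ m / ((d : ℝ) - 1)) y
      (fun m hm => div_nonneg (hφnonneg m hm) (le_of_lt hd1))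
      (fun v _ => hy0 v) ?_ (le_refl _)
    intro s hs
    have hfiltereq : M.filter (fun m => s < φ m / ((d : ℝ) - 1))
        = M.filter (fun m => s * ((d : ℝ) - 1) < φ m) := by
      apply Finset.filter_congr
      intro m _
      simp only [lt_div_iff₀ hd1]
    rw [hfiltereq]
    exact swap_bound d hd E hunif c hc M hhit hmin y hy0 φ hφle s hs
  have heq2 : ∑ m ∈ M, c m * (φ m / ((d : ℝ) - 1))
      = (1 / ((d : ℝ) - 1)) * ∑ m ∈ M, c m * φ m := by
    rw [Finset.mul_sum]
    apply Finset.sum_congr rfl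
    intro m _
    field_simp
  rw [hval] at hstrict
  rw [heq2] at hdomfinal
  linarith


/-- the Mafia Hitting Set Game on a finite `d`-uniform hypergraph (`d ≥ 2`)
with nonnegative costs always has a pure Nash equilibrium. -/
theorem stmt_12 (d : ℕ) (hd : 2 ≤ d) (E : Finset (Finset V))
    (hunif : ∀ S ∈ E, S.card = d)
    (c : V → ℝ) (hc : ∀ v, 0 ≤ c v) (T : ℝ) (hT : 2 * ∑ v, c v < T) :
    ∃ (M : Finset V) (r : V → Finset V → ℝ), IsNashEq d E c T M r := by
  obtain ⟨M, r, hhit, hvalid, hfeas⟩ := exists_good_profile d hd E hunif c hc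
  exact ⟨M, r, nash_of_good d hd E hunif c hc T hT M r hhit hvalid hfeas⟩

end
end MafiaHS
end

section
/- Let the strategy profile (M, r) of the Mafia Hitting Set Game be a pure Nash equilibrium. Then there are no protected mafiosi, i.e., D(v) ≤ c(v) for every v ∈ M. -/
open Finset
open scoped Classical

namespace MafiaHS

variable {V : Type*} [Fintype V] [DecidableEq V]

noncomputable section

/-- The demand on `m` does not depend on `m`'s own row of the ransom matrix. -/
lemma demand_own_row (d : ℕ) (E : Finset (Finset V)) (M : Finset V)
    (r r' : V → Finset V → ℝ) (m : V)
    (h : ∀ u S, u ≠ m → r' u S = r u S) :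
    demand d E M r' m = demand d E M r m := by
  unfold demand
  congr 1
  refine Finset.sum_congr rfl fun S _ => Finset.sum_congr rfl fun u hu => ?_
  exact h u S (Finset.mem_erase.mp hu).1

/-- The bracket appearing in `F⁺` written as a single sum of weights. -/
lemma bracket_eq (c : V → ℝ) (M : Finset V) (D : V → ℝ) (S : Finset V) (v : V) :
    ((((S.filter fun u => ¬(u ∈ M ∧ c u < D u)).erase v).card : ℝ) +
      ∑ u ∈ (S.filter fun u => u ∈ M ∧ c u < D u).erase v, c u / D u)
    = ∑ u ∈ S.erase v, (if u ∈ M ∧ c u < D u then c u / D u else 1) := by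
  classical
  rw [Finset.sum_ite (fun u => c u / D u) (fun _ => (1 : ℝ)),
    Finset.filter_erase, Finset.filter_erase, Finset.sum_const, nsmul_eq_mul, mul_one]
  ring

/-- Splitting off two distinct elements of a sum. -/
lemma sum_split_two {α : Type*} [DecidableEq α] (s : Finset α) (f : α → ℝ) (a b : α)
    (ha : a ∈ s) (hb : b ∈ s) (hab : a ≠ b) :
    ∑ x ∈ s, f x = f a + f b + ∑ x ∈ (s.erase a).erase b, f x := by
  rw [← Finset.add_sum_erase s f ha,
    ← Finset.add_sum_erase (s.erase a) f (Finset.mem_erase.mpr ⟨hab.symm, hb⟩)]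
  ring

/-- in any pure Nash equilibrium `(M, r)` of the Mafia Hitting Set Game there
are no protected mafiosi, i.e. `D v ≤ c v` for every mafioso `v`. -/
theorem stmt_13 (d : ℕ) (hd : 2 ≤ d) (E : Finset (Finset V))
    (hunif : ∀ S ∈ E, S.card = d)
    (c : V → ℝ) (hc : ∀ v, 0 ≤ c v) (T : ℝ) (hT : 2 * ∑ v, c v < T)
    (M : Finset V) (r : V → Finset V → ℝ)
    (hnash : IsNashEq d E c T M r) :
    ∀ v ∈ M, demand d E M r v ≤ c v := by
  classical
  obtain ⟨⟨hr0, hrz, hrsum⟩, hdev⟩ := hnash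
  by_contra hcon
  push_neg at hcon
  obtain ⟨v₀, hv₀M, hv₀⟩ := hcon
  have h1d : 1 ≤ d := le_trans one_le_two hd
  have hK0 : (0:ℝ) < (d:ℝ) - 1 := by
    have : (2:ℝ) ≤ (d:ℝ) := by exact_mod_cast hd
    linarith
  set P : Finset V := M.filter (fun u => c u < demand d E M r u) with hPdef
  have hPsubM : P ⊆ M := Finset.filter_subset _ _
  have hPne : P.Nonempty := ⟨v₀, by rw [hPdef]; exact Finset.mem_filter.mpr ⟨hv₀M, hv₀⟩⟩
  -- Counting lemma: some UNPROTECTED mafioso pays positive ransom into a protected one.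
  have hexists : ∃ m ∈ M, demand d E M r m ≤ c m ∧ ∃ S₀ ∈ E, m ∈ S₀ ∧ 0 < r m S₀ ∧
      ∃ v ∈ S₀, v ≠ m ∧ v ∈ P := by
    by_contra hno
    push_neg at hno
    have key : ∀ S ∈ E, ∀ m' ∈ M ∩ S,
        (∑ p ∈ P.filter (fun p => p ∈ S), if m' ≠ p then r m' S else 0)
          ≤ (if m' ∈ P then ((d:ℝ)-1) * r m' S else 0) := by
      intro S hS m' hm'
      obtain ⟨hm'M, hm'S⟩ := Finset.mem_inter.mp hm'
      by_cases hm'P : m' ∈ P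
      · rw [if_pos hm'P, ← Finset.sum_filter, Finset.sum_const, nsmul_eq_mul]
        have hsub : (P.filter (fun p => p ∈ S)).filter (fun p => m' ≠ p) ⊆ S.erase m' := by
          intro x hx
          simp only [Finset.mem_filter] at hx
          exact Finset.mem_erase.mpr ⟨fun h => hx.2 h.symm, hx.1.2⟩
        have hcard : ((P.filter (fun p => p ∈ S)).filter (fun p => m' ≠ p)).card ≤ d - 1 := by
          calc ((P.filter (fun p => p ∈ S)).filter (fun p => m' ≠ p)).card
              ≤ (S.erase m').card := Finset.card_le_card hsub
            _ = d - 1 := by rw [Finset.card_erase_of_mem hm'S, hunif S hS]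
        have hcardR : ((((P.filter (fun p => p ∈ S)).filter (fun p => m' ≠ p)).card : ℕ) : ℝ)
            ≤ (d:ℝ) - 1 := by
          calc ((((P.filter (fun p => p ∈ S)).filter (fun p => m' ≠ p)).card : ℕ) : ℝ)
              ≤ (((d - 1 : ℕ)) : ℝ) := Nat.cast_le.mpr hcard
            _ = (d:ℝ) - 1 := by rw [Nat.cast_sub h1d, Nat.cast_one]
        exact mul_le_mul_of_nonneg_right hcardR (hr0 m' S)
      · rw [if_neg hm'P]
        have hunp : demand d E M r m' ≤ c m' :=
          le_of_not_gt fun h => hm'P (by rw [hPdef]; exact Finset.mem_filter.mpr ⟨hm'M, h⟩)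
        have hz : ∀ p ∈ P.filter (fun p => p ∈ S), (if m' ≠ p then r m' S else 0) = 0 := by
          intro p hp
          obtain ⟨hpP, hpS⟩ := Finset.mem_filter.mp hp
          by_cases hpm : m' = p
          · rw [if_neg (by simp [hpm])]
          · rw [if_pos hpm]
            rcases lt_or_ge 0 (r m' S) with hpos | hle0
            · exact absurd hpP (hno m' hm'M hunp S hS hm'S hpos p hpS (fun h => hpm h.symm))
            · exact le_antisymm hle0 (hr0 m' S)
        rw [Finset.sum_eq_zero hz]
    have hKc : ∀ p ∈ P, ((d:ℝ)-1) * c p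
        < ∑ S ∈ E.filter (fun S => p ∈ S), ∑ m' ∈ (M ∩ S).erase p, r m' S := by
      intro p hp
      have hpp : c p < demand d E M r p := by
        rw [hPdef] at hp
        exact (Finset.mem_filter.mp hp).2
      calc ((d:ℝ)-1) * c p < ((d:ℝ)-1) * demand d E M r p := mul_lt_mul_of_pos_left hpp hK0
        _ = _ := by unfold demand; rw [← mul_assoc, mul_one_div_cancel hK0.ne', one_mul]
    have hlt : ((d:ℝ)-1) * ∑ p ∈ P, c p
        < ∑ p ∈ P, ∑ S ∈ E.filter (fun S => p ∈ S), ∑ m' ∈ (M∩S).erase p, r m' S := by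
      rw [Finset.mul_sum]
      exact Finset.sum_lt_sum_of_nonempty hPne hKc
    have hswap : ∑ p ∈ P, ∑ S ∈ E.filter (fun S => p ∈ S), ∑ m' ∈ (M∩S).erase p, r m' S
        = ∑ S ∈ E, ∑ m' ∈ M ∩ S, ∑ p ∈ P.filter (fun p => p ∈ S),
            (if m' ≠ p then r m' S else 0) := by
      calc ∑ p ∈ P, ∑ S ∈ E.filter (fun S => p ∈ S), ∑ m' ∈ (M∩S).erase p, r m' S
          = ∑ p ∈ P, ∑ S ∈ E, if p ∈ S then ∑ m' ∈ (M∩S).erase p, r m' S else 0 := by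
            refine Finset.sum_congr rfl fun p _ => ?_
            rw [Finset.sum_filter]
        _ = ∑ S ∈ E, ∑ p ∈ P, if p ∈ S then ∑ m' ∈ (M∩S).erase p, r m' S else 0 :=
            Finset.sum_comm
        _ = ∑ S ∈ E, ∑ p ∈ P.filter (fun p => p ∈ S), ∑ m' ∈ (M∩S).erase p, r m' S :=
            Finset.sum_congr rfl fun S _ => (Finset.sum_filter _ _).symm
        _ = ∑ S ∈ E, ∑ p ∈ P.filter (fun p => p ∈ S), ∑ m' ∈ M∩S,
              (if m' ≠ p then r m' S else 0) := by
            refine Finset.sum_congr rfl fun S _ => Finset.sum_congr rfl fun p _ => ?_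
            rw [← Finset.filter_ne' (M∩S) p, Finset.sum_filter]
        _ = _ := Finset.sum_congr rfl fun S _ => Finset.sum_comm
    have hub : ∑ S ∈ E, ∑ m' ∈ M∩S, ∑ p ∈ P.filter (fun p => p ∈ S),
          (if m' ≠ p then r m' S else 0)
        ≤ ∑ S ∈ E, ∑ m' ∈ M∩S, (if m' ∈ P then ((d:ℝ)-1) * r m' S else 0) :=
      Finset.sum_le_sum fun S hS => Finset.sum_le_sum fun m' hm' => key S hS m' hm'
    have hfinal : ∑ S ∈ E, ∑ m' ∈ M∩S, (if m' ∈ P then ((d:ℝ)-1)*r m' S else 0)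
        = ((d:ℝ)-1) * ∑ p ∈ P, c p := by
      calc ∑ S ∈ E, ∑ m' ∈ M∩S, (if m' ∈ P then ((d:ℝ)-1)*r m' S else 0)
          = ∑ S ∈ E, ∑ m' ∈ (M∩S).filter (fun m' => m' ∈ P), ((d:ℝ)-1)*r m' S := by
            refine Finset.sum_congr rfl fun S _ => ?_
            rw [Finset.sum_filter]
        _ = ∑ S ∈ E, ∑ m' ∈ P.filter (fun m' => m' ∈ S), ((d:ℝ)-1)*r m' S := by
            refine Finset.sum_congr rfl fun S _ => ?_
            congr 1
            ext x
            simp only [Finset.mem_filter, Finset.mem_inter]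
            constructor
            · rintro ⟨⟨_, hxS⟩, hxP⟩; exact ⟨hxP, hxS⟩
            · rintro ⟨hxP, hxS⟩; exact ⟨⟨hPsubM hxP, hxS⟩, hxP⟩
        _ = ∑ S ∈ E, ∑ m' ∈ P, if m' ∈ S then ((d:ℝ)-1)*r m' S else 0 :=
            Finset.sum_congr rfl fun S _ => Finset.sum_filter _ _
        _ = ∑ m' ∈ P, ∑ S ∈ E, if m' ∈ S then ((d:ℝ)-1)*r m' S else 0 := Finset.sum_comm
        _ = ∑ m' ∈ P, ∑ S ∈ E.filter (fun S => m' ∈ S), ((d:ℝ)-1)*r m' S :=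
            Finset.sum_congr rfl fun m' _ => (Finset.sum_filter _ _).symm
        _ = ∑ m' ∈ P, ((d:ℝ)-1) * c m' := by
            refine Finset.sum_congr rfl fun m' hm' => ?_
            rw [← Finset.mul_sum, hrsum m' (hPsubM hm')]
        _ = ((d:ℝ)-1) * ∑ p ∈ P, c p := (Finset.mul_sum _ _ _).symm
    rw [hswap] at hlt
    linarith
  obtain ⟨m, hmM, hmunprot, S₀, hS₀E, hmS₀, hrpos, v, hvS₀, hvm, hvP⟩ := hexists
  have hvM : v ∈ M := hPsubM hvP
  have hvprot : c v < demand d E M r v := by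
    have h := hvP
    rw [hPdef] at h
    exact (Finset.mem_filter.mp h).2
  have hDv0 : 0 < demand d E M r v := lt_of_le_of_lt (hc v) hvprot
  set w : V → ℝ := fun u =>
    if u ∈ M ∧ c u < demand d E M r u then c u / demand d E M r u else 1 with hwdef
  have hw_le : ∀ u, w u ≤ 1 := by
    intro u
    rw [hwdef]
    dsimp only
    split
    · next h => exact div_le_one_of_le₀ h.2.le (le_of_lt (lt_of_le_of_lt (hc u) h.2))
    · exact le_refl 1
  have hwv : w v < 1 := by
    rw [hwdef]
    dsimp only
    rw [if_pos ⟨hvM, hvprot⟩]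
    exact (div_lt_one hDv0).mpr hvprot
  have hcardS : ∀ S ∈ E, ∀ x ∈ S, (((S.erase x).card : ℕ) : ℝ) = (d:ℝ) - 1 := by
    intro S hS x hx
    rw [Finset.card_erase_of_mem hx, hunif S hS, Nat.cast_sub h1d, Nat.cast_one]
  have hWle : ∀ S ∈ E, ∀ x ∈ S, ∑ u ∈ S.erase x, w u ≤ (d:ℝ) - 1 := by
    intro S hS x hx
    calc ∑ u ∈ S.erase x, w u ≤ ∑ u ∈ S.erase x, 1 :=
        Finset.sum_le_sum fun u _ => hw_le u
      _ = (((S.erase x).card : ℕ) : ℝ) := by rw [Finset.sum_const, nsmul_eq_mul, mul_one]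
      _ = (d:ℝ) - 1 := hcardS S hS x hx
  have hWS₀ : ∑ u ∈ S₀.erase m, w u < (d:ℝ) - 1 := by
    have hvS₀' : v ∈ S₀.erase m := Finset.mem_erase.mpr ⟨hvm, hvS₀⟩
    calc ∑ u ∈ S₀.erase m, w u < ∑ u ∈ S₀.erase m, 1 :=
        Finset.sum_lt_sum (fun u _ => hw_le u) ⟨v, hvS₀', hwv⟩
      _ = (((S₀.erase m).card : ℕ) : ℝ) := by rw [Finset.sum_const, nsmul_eq_mul, mul_one]
      _ = (d:ℝ) - 1 := hcardS S₀ hS₀E m hmS₀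
  have hS₀A : S₀ ∈ E.filter (fun S => m ∈ S) := Finset.mem_filter.mpr ⟨hS₀E, hmS₀⟩
  -- F⁺ of m (written in weight form) is strictly below c m
  have hFlt : (∑ S ∈ E.filter (fun S => m ∈ S),
      (r m S / ((d:ℝ)-1)) * ∑ u ∈ S.erase m, w u) < c m := by
    have hterm : ∀ S ∈ E.filter (fun S => m ∈ S),
        (r m S / ((d:ℝ)-1)) * ∑ u ∈ S.erase m, w u ≤ r m S := by
      intro S hS
      obtain ⟨hSE, hmS⟩ := Finset.mem_filter.mp hS
      calc (r m S / ((d:ℝ)-1)) * ∑ u ∈ S.erase m, w u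
          ≤ (r m S / ((d:ℝ)-1)) * ((d:ℝ)-1) :=
            mul_le_mul_of_nonneg_left (hWle S hSE m hmS) (div_nonneg (hr0 m S) hK0.le)
        _ = r m S := div_mul_cancel₀ _ hK0.ne'
    calc (∑ S ∈ E.filter (fun S => m ∈ S), (r m S / ((d:ℝ)-1)) * ∑ u ∈ S.erase m, w u)
        < ∑ S ∈ E.filter (fun S => m ∈ S), r m S := by
          refine Finset.sum_lt_sum hterm ⟨S₀, hS₀A, ?_⟩
          calc (r m S₀ / ((d:ℝ)-1)) * ∑ u ∈ S₀.erase m, w u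
              < (r m S₀ / ((d:ℝ)-1)) * ((d:ℝ)-1) :=
                mul_lt_mul_of_pos_left hWS₀ (div_pos hrpos hK0)
            _ = r m S₀ := div_mul_cancel₀ _ hK0.ne'
      _ = c m := hrsum m hmM
  -- F⁺ of m in weight form equals the expression in `utility`
  have hUold : utility d E c T M r m =
      -c m + (∑ S ∈ E.filter (fun S => m ∈ S),
        (r m S / ((d:ℝ)-1)) * ∑ u ∈ S.erase m, w u) - min (demand d E M r m) (c m) := by
    rw [utility, if_pos hmM]
    have : ∀ S ∈ E.filter (fun S => m ∈ S),
        (r m S / ((d : ℝ) - 1)) *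
          ((((S.filter fun u => ¬(u ∈ M ∧ c u < demand d E M r u)).erase m).card : ℝ) +
            ∑ u ∈ (S.filter fun u => u ∈ M ∧ c u < demand d E M r u).erase m,
              c u / demand d E M r u)
        = (r m S / ((d:ℝ)-1)) * ∑ u ∈ S.erase m, w u := by
      intro S _
      rw [bracket_eq c M (demand d E M r) S m]
    rw [Finset.sum_congr rfl this]
  by_cases hsole : ∃ S₁ ∈ E, m ∈ S₁ ∧ M ∩ S₁ = {m}
  · -- Case 1: m is the sole mafioso of some club S₁: reroute ransom from S₀ to S₁.
    obtain ⟨S₁, hS₁E, hmS₁, hsol⟩ := hsole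
    have hS₁A : S₁ ∈ E.filter (fun S => m ∈ S) := Finset.mem_filter.mpr ⟨hS₁E, hmS₁⟩
    have hS₀S₁ : S₀ ≠ S₁ := by
      intro h
      have : v ∈ M ∩ S₁ := Finset.mem_inter.mpr ⟨hvM, h ▸ hvS₀⟩
      rw [hsol] at this
      exact hvm (Finset.mem_singleton.mp this)
    set r' : V → Finset V → ℝ := fun u S =>
      if u = m then (if S = S₀ then 0 else if S = S₁ then r m S₁ + r m S₀ else r u S)
      else r u S with hr'def
    have hr'm : ∀ S, r' m S =
        if S = S₀ then 0 else if S = S₁ then r m S₁ + r m S₀ else r m S := by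
      intro S; rw [hr'def]; dsimp only; rw [if_pos rfl]
    have hr'o : ∀ u S, u ≠ m → r' u S = r u S := by
      intro u S hu; rw [hr'def]; dsimp only; rw [if_neg hu]
    have hr'0 : ∀ u S, 0 ≤ r' u S := by
      intro u S
      by_cases hu : u = m
      · subst hu
        rw [hr'm]
        split
        · exact le_refl 0
        · split
          · exact add_nonneg (hr0 u S₁) (hr0 u S₀)
          · exact hr0 u S
      · rw [hr'o u S hu]; exact hr0 u S
    have hvalid' : ValidProfile E c M r' := by
      refine ⟨hr'0, ?_, ?_⟩
      · intro u S h
        by_cases hu : u = m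
        · subst hu
          rw [hr'm]
          by_cases hS0 : S = S₀
          · rw [if_pos hS0]
          · rw [if_neg hS0]
            by_cases hS1 : S = S₁
            · subst hS1
              exfalso
              rcases h with h | h | h
              · exact h hmM
              · exact h hmS₁
              · exact h hS₁E
            · rw [if_neg hS1]; exact hrz u S h
        · rw [hr'o u S hu]; exact hrz u S h
      · intro u hu
        by_cases hum : u = m
        · subst hum
          rw [sum_split_two _ _ S₀ S₁ hS₀A hS₁A hS₀S₁, ← hrsum u hu,
            sum_split_two (E.filter (fun S => u ∈ S)) (fun S => r u S) S₀ S₁ hS₀A hS₁A hS₀S₁]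
          have hrest : ∑ S ∈ ((E.filter (fun S => u ∈ S)).erase S₀).erase S₁, r' u S
              = ∑ S ∈ ((E.filter (fun S => u ∈ S)).erase S₀).erase S₁, r u S := by
            refine Finset.sum_congr rfl fun S hS => ?_
            have hS1 : S ≠ S₁ := (Finset.mem_erase.mp hS).1
            have hS0 : S ≠ S₀ := (Finset.mem_erase.mp (Finset.mem_erase.mp hS).2).1
            rw [hr'm, if_neg hS0, if_neg hS1]
          rw [hrest, hr'm S₀, hr'm S₁, if_pos rfl, if_neg (Ne.symm hS₀S₁), if_pos rfl]
          ring
        · rw [← hrsum u hu]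
          exact Finset.sum_congr rfl fun S _ => hr'o u S hum
    have hdevn : Deviation m M M r r' := ⟨fun u _ => Iff.rfl, hr'o⟩
    have hle := hdev m M r' hvalid' hdevn
    -- demands can only decrease for mafiosi other than m
    have hDm' : demand d E M r' m = demand d E M r m := demand_own_row d E M r r' m hr'o
    have hDle : ∀ u, u ∈ M → u ≠ m → demand d E M r' u ≤ demand d E M r u := by
      intro u huM hum
      unfold demand
      refine mul_le_mul_of_nonneg_left ?_ (le_of_lt (by positivity : (0:ℝ) < 1/((d:ℝ)-1)))
      refine Finset.sum_le_sum fun S hS => Finset.sum_le_sum fun m' hm' => ?_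
      by_cases hm'm : m' = m
      · subst hm'm
        rw [hr'm]
        have hSS₁ : S ≠ S₁ := by
          intro h
          have : u ∈ M ∩ S₁ :=
            Finset.mem_inter.mpr ⟨huM, h ▸ (Finset.mem_filter.mp hS).2⟩
          rw [hsol] at this
          exact hum (Finset.mem_singleton.mp this)
        by_cases hSS₀ : S = S₀
        · rw [if_pos hSS₀]; exact hr0 m' S
        · rw [if_neg hSS₀, if_neg hSS₁]
      · rw [hr'o m' S hm'm]
    -- new weights dominate old weights
    set w' : V → ℝ := fun u =>
      if u ∈ M ∧ c u < demand d E M r' u then c u / demand d E M r' u else 1 with hw'def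
    have hw'ge : ∀ u, u ≠ m → w u ≤ w' u := by
      intro u hum
      rw [hw'def]
      dsimp only
      by_cases h' : u ∈ M ∧ c u < demand d E M r' u
      · rw [if_pos h']
        have hDu : demand d E M r' u ≤ demand d E M r u := hDle u h'.1 hum
        have h : u ∈ M ∧ c u < demand d E M r u := ⟨h'.1, lt_of_lt_of_le h'.2 hDu⟩
        have h0' : 0 < demand d E M r' u := lt_of_le_of_lt (hc u) h'.2
        rw [hwdef]
        dsimp only
        rw [if_pos h]
        exact div_le_div_of_nonneg_left (hc u) h0' hDu
      · rw [if_neg h']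
        exact hw_le u
    -- rewrite the deviated utility
    have hUnew : utility d E c T M r' m =
        -c m + (∑ S ∈ E.filter (fun S => m ∈ S),
          (r' m S / ((d:ℝ)-1)) * ∑ u ∈ S.erase m, w' u) - min (demand d E M r m) (c m) := by
      rw [utility, if_pos hmM, hDm']
      have : ∀ S ∈ E.filter (fun S => m ∈ S),
          (r' m S / ((d : ℝ) - 1)) *
            ((((S.filter fun u => ¬(u ∈ M ∧ c u < demand d E M r' u)).erase m).card : ℝ) +
              ∑ u ∈ (S.filter fun u => u ∈ M ∧ c u < demand d E M r' u).erase m,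
                c u / demand d E M r' u)
          = (r' m S / ((d:ℝ)-1)) * ∑ u ∈ S.erase m, w' u := by
        intro S _
        rw [bracket_eq c M (demand d E M r') S m]
      rw [Finset.sum_congr rfl this]
    -- the weight-sum over S₁ is maximal
    have hW₁ : ∑ u ∈ S₁.erase m, w u = (d:ℝ) - 1 := by
      have hall : ∀ u ∈ S₁.erase m, w u = 1 := by
        intro u hu
        obtain ⟨hum, huS⟩ := Finset.mem_erase.mp hu
        rw [hwdef]
        dsimp only
        rw [if_neg]
        rintro ⟨huM, -⟩
        have : u ∈ M ∩ S₁ := Finset.mem_inter.mpr ⟨huM, huS⟩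
        rw [hsol] at this
        exact hum (Finset.mem_singleton.mp this)
      rw [Finset.sum_congr rfl hall, Finset.sum_const, nsmul_eq_mul, mul_one]
      exact hcardS S₁ hS₁E m hmS₁
    -- middle quantity: new ransoms, old weights
    have hmid1 : (∑ S ∈ E.filter (fun S => m ∈ S),
        (r' m S / ((d:ℝ)-1)) * ∑ u ∈ S.erase m, w u)
        ≤ ∑ S ∈ E.filter (fun S => m ∈ S),
          (r' m S / ((d:ℝ)-1)) * ∑ u ∈ S.erase m, w' u := by
      refine Finset.sum_le_sum fun S _ => ?_
      refine mul_le_mul_of_nonneg_left ?_ (div_nonneg (hr'0 m S) hK0.le)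
      exact Finset.sum_le_sum fun u hu => hw'ge u (Finset.mem_erase.mp hu).1
    have hmid2 : (∑ S ∈ E.filter (fun S => m ∈ S),
        (r m S / ((d:ℝ)-1)) * ∑ u ∈ S.erase m, w u)
        < ∑ S ∈ E.filter (fun S => m ∈ S),
          (r' m S / ((d:ℝ)-1)) * ∑ u ∈ S.erase m, w u := by
      rw [sum_split_two _ _ S₀ S₁ hS₀A hS₁A hS₀S₁,
        sum_split_two (E.filter (fun S => m ∈ S))
          (fun S => (r' m S / ((d:ℝ)-1)) * ∑ u ∈ S.erase m, w u) S₀ S₁ hS₀A hS₁A hS₀S₁]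
      have hrest : ∑ S ∈ ((E.filter (fun S => m ∈ S)).erase S₀).erase S₁,
            (r' m S / ((d:ℝ)-1)) * ∑ u ∈ S.erase m, w u
          = ∑ S ∈ ((E.filter (fun S => m ∈ S)).erase S₀).erase S₁,
            (r m S / ((d:ℝ)-1)) * ∑ u ∈ S.erase m, w u := by
        refine Finset.sum_congr rfl fun S hS => ?_
        have hS1 : S ≠ S₁ := (Finset.mem_erase.mp hS).1
        have hS0 : S ≠ S₀ := (Finset.mem_erase.mp (Finset.mem_erase.mp hS).2).1
        rw [hr'm, if_neg hS0, if_neg hS1]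
      rw [hrest, hr'm S₀, hr'm S₁, if_pos rfl, if_neg (Ne.symm hS₀S₁), if_pos rfl, hW₁]
      have e1 : ((r m S₁ + r m S₀) / ((d:ℝ)-1)) * ((d:ℝ)-1) = r m S₁ + r m S₀ :=
        div_mul_cancel₀ _ hK0.ne'
      have e2 : (r m S₁ / ((d:ℝ)-1)) * ((d:ℝ)-1) = r m S₁ := div_mul_cancel₀ _ hK0.ne'
      have e3 : (r m S₀ / ((d:ℝ)-1)) * (∑ u ∈ S₀.erase m, w u)
          < (r m S₀ / ((d:ℝ)-1)) * ((d:ℝ)-1) :=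
        mul_lt_mul_of_pos_left hWS₀ (div_pos hrpos hK0)
      have e4 : (r m S₀ / ((d:ℝ)-1)) * ((d:ℝ)-1) = r m S₀ := div_mul_cancel₀ _ hK0.ne'
      have e5 : ((0:ℝ) / ((d:ℝ)-1)) * (∑ u ∈ S₀.erase m, w u) = 0 := by
        rw [zero_div, zero_mul]
      linarith
    rw [hUold, hUnew] at hle
    linarith
  · -- Case 2: every club of m has another mafioso: m becomes a civilian.
    set r' : V → Finset V → ℝ := fun u S => if u = m then 0 else r u S with hr'def
    have hr'o : ∀ u S, u ≠ m → r' u S = r u S := by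
      intro u S hu; rw [hr'def]; dsimp only; rw [if_neg hu]
    have hvalid' : ValidProfile E c (M.erase m) r' := by
      refine ⟨?_, ?_, ?_⟩
      · intro u S
        rw [hr'def]
        dsimp only
        split
        · exact le_refl 0
        · exact hr0 u S
      · intro u S h
        by_cases hu : u = m
        · subst hu; rw [hr'def]; dsimp only; rw [if_pos rfl]
        · rw [hr'o u S hu]
          refine hrz u S ?_
          rcases h with h | h | h
          · exact Or.inl fun hM => h (Finset.mem_erase.mpr ⟨hu, hM⟩)
          · exact Or.inr (Or.inl h)
          · exact Or.inr (Or.inr h)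
      · intro u hu
        have hum : u ≠ m := (Finset.mem_erase.mp hu).1
        have huM : u ∈ M := (Finset.mem_erase.mp hu).2
        rw [← hrsum u huM]
        exact Finset.sum_congr rfl fun S _ => hr'o u S hum
    have hdevn : Deviation m M (M.erase m) r r' := by
      refine ⟨fun u hu => ?_, fun u S hu => hr'o u S hu⟩
      constructor
      · intro h; exact (Finset.mem_erase.mp h).2
      · intro h; exact Finset.mem_erase.mpr ⟨hu, h⟩
    have hle := hdev m (M.erase m) r' hvalid' hdevn
    have hDm' : demand d E (M.erase m) r' m = demand d E M r m := by
      unfold demand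
      congr 1
      refine Finset.sum_congr rfl fun S _ => ?_
      have hset : ((M.erase m) ∩ S).erase m = (M ∩ S).erase m := by
        ext x
        simp only [Finset.mem_erase, Finset.mem_inter]
        tauto
      rw [hset]
      exact Finset.sum_congr rfl fun u hu => hr'o u S (Finset.mem_erase.mp hu).1
    have hpen : ¬ ∃ S ∈ E, m ∈ S ∧ (M.erase m) ∩ S = ∅ := by
      rintro ⟨S, hSE, hmS, hempty⟩
      apply hsole
      refine ⟨S, hSE, hmS, ?_⟩
      ext x
      simp only [Finset.mem_inter, Finset.mem_singleton]
      constructor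
      · rintro ⟨hxM, hxS⟩
        by_contra hxm
        have : x ∈ (M.erase m) ∩ S :=
          Finset.mem_inter.mpr ⟨Finset.mem_erase.mpr ⟨hxm, hxM⟩, hxS⟩
        rw [hempty] at this
        exact absurd this (Finset.notMem_empty x)
      · rintro rfl; exact ⟨hmM, hmS⟩
    have hUL : utility d E c T (M.erase m) r' m = -(demand d E M r m) := by
      rw [utility, if_neg (Finset.notMem_erase m M), hDm', if_neg hpen]
      ring
    rw [hUL, hUold, min_eq_left hmunprot] at hle
    linarith

end
end MafiaHS
end
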